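/- arXiv:1701.04942 — 5 statements merged into one kernel-verified Lean document; each statement's English description precedes it below -/
import Mathlib

section
/- Let G be a finite abelian group and H ⊆ G a subgroup such that exp(G) = exp(H) · exp(G/H). Then 𝔰(G) ≤ exp(G/H) · (𝔰(H) − 1) + 𝔰(G/H). -/
/-- The Erdős–Ginzburg–Ziv constant of an abelian group `G`: the smallest `k` such that
every multiset of elements of `G` of cardinality `k` contains a sub-multiset of
cardinality `exp(G)` summing to zero. -/
noncomputable def EGZ (G : Type*) [AddCommMonoid G] : ℕ :=
  sInf {k | ∀ S : Multiset G, Multiset.card S = k →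
    ∃ T ≤ S, Multiset.card T = AddMonoid.exponent G ∧ T.sum = 0}

namespace EGZAux

open Multiset

/-- Any multiset has a sub-multiset of any smaller cardinality. -/
lemma exists_le_card {α : Type*} (s : Multiset α) (n : ℕ) (h : n ≤ Multiset.card s) :
    ∃ t ≤ s, Multiset.card t = n := by
  refine ⟨(s.toList.take n : List α), ?_, ?_⟩
  · conv_rhs => rw [← s.coe_toList]
    exact (s.toList.take_sublist n).subperm
  · simp [List.length_take]; omega

/-- A sub-multiset of a mapped multiset lifts. -/
lemma exists_le_of_le_map {α β : Type*} {f : α → β} :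
    ∀ (t : Multiset β) (s : Multiset α), t ≤ s.map f → ∃ u ≤ s, u.map f = t := by
  classical
  intro t
  induction t using Multiset.induction_on with
  | empty => exact fun s _ => ⟨0, Multiset.zero_le _, rfl⟩
  | cons b t ih =>
    intro s h
    have hb : b ∈ s.map f := mem_of_le h (mem_cons_self b t)
    obtain ⟨a, ha, rfl⟩ := mem_map.1 hb
    have ht : t ≤ (s.erase a).map f := by
      rw [map_erase_of_mem f s ha]
      have := erase_le_erase (f a) h
      rwa [erase_cons_head] at this
    obtain ⟨u, hu, hmap⟩ := ih (s.erase a) ht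
    refine ⟨a ::ₘ u, ?_, by rw [map_cons, hmap]⟩
    calc a ::ₘ u ≤ a ::ₘ s.erase a := cons_le_cons a hu
      _ = s := cons_erase ha

variable {K : Type*} [AddCommGroup K] [Finite K]

lemma egzSet_nonempty :
    {k | ∀ S : Multiset K, Multiset.card S = k →
      ∃ T ≤ S, Multiset.card T = AddMonoid.exponent K ∧ T.sum = 0}.Nonempty := by
  classical
  have := Fintype.ofFinite K
  set n := AddMonoid.exponent K with hn
  have hn0 : n ≠ 0 := AddMonoid.exponent_ne_zero_of_finite
  refine ⟨Fintype.card K * (n - 1) + 1, fun S hS => ?_⟩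
  have hx : ∃ x : K, n ≤ S.count x := by
    by_contra hcon
    push_neg at hcon
    have h1 : Multiset.card S = ∑ a ∈ S.toFinset, S.count a := (S.toFinset_sum_count_eq).symm
    have h2 : ∑ a ∈ S.toFinset, S.count a ≤ ∑ _a ∈ S.toFinset, (n - 1) :=
      Finset.sum_le_sum fun a _ => by have := hcon a; omega
    have h3 : S.toFinset.card ≤ Fintype.card K := Finset.card_le_univ _
    rw [Finset.sum_const, smul_eq_mul] at h2
    have : Multiset.card S ≤ Fintype.card K * (n - 1) := by
      calc Multiset.card S ≤ S.toFinset.card * (n - 1) := by omega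
        _ ≤ Fintype.card K * (n - 1) := Nat.mul_le_mul_right _ h3
    omega
  obtain ⟨x, hx⟩ := hx
  refine ⟨Multiset.replicate n x, le_count_iff_replicate_le.1 hx, card_replicate _ _, ?_⟩
  rw [sum_replicate, hn]
  exact AddMonoid.exponent_nsmul_eq_zero x

/-- Any multiset of cardinality at least `EGZ K` contains a zero-sum sub-multiset
of cardinality `exp K`. -/
lemma egz_spec (S : Multiset K) (h : EGZ K ≤ Multiset.card S) :
    ∃ T ≤ S, Multiset.card T = AddMonoid.exponent K ∧ T.sum = 0 := by
  have hmem := Nat.sInf_mem (egzSet_nonempty (K := K))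
  obtain ⟨S', hS'le, hS'card⟩ := exists_le_card S (EGZ K) h
  obtain ⟨T, hTle, hT⟩ := hmem S' hS'card
  exact ⟨T, hTle.trans hS'le, hT⟩

end EGZAux

open Multiset EGZAux in
theorem stmt_5 (G : Type*) [AddCommGroup G] [Fintype G] (H : AddSubgroup G)
    (hexp : AddMonoid.exponent G =
      AddMonoid.exponent H * AddMonoid.exponent (G ⧸ H)) :
    EGZ G ≤ AddMonoid.exponent (G ⧸ H) * (EGZ H - 1) + EGZ (G ⧸ H) := by
  classical
  set m := AddMonoid.exponent (G ⧸ H) with hm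
  set sQ := EGZ (G ⧸ H) with hsQ
  set sH := EGZ H with hsH
  set π := QuotientAddGroup.mk' H with hπ
  -- Block extraction lemma
  have blocks : ∀ (j : ℕ) (S : Multiset G), j * m + sQ ≤ Multiset.card S + m →
      ∃ B : Multiset (Multiset G), Multiset.card B = j ∧ B.join ≤ S ∧
        ∀ T ∈ B, Multiset.card T = m ∧ T.sum ∈ H := by
    intro j
    induction j with
    | zero => exact fun S _ => ⟨0, rfl, by simp, by simp⟩
    | succ j ih =>
      intro S hS
      have hsQle : sQ ≤ Multiset.card S := by
        have : (j + 1) * m = j * m + m := by ring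
        omega
      -- find one block
      obtain ⟨U, hUle, hUcard, hUsum⟩ := egz_spec (S.map (π : G → G ⧸ H))
        (by rwa [card_map])
      obtain ⟨u, hule, humap⟩ := exists_le_of_le_map U S hUle
      have hucard : Multiset.card u = m := by
        have := hUcard; rw [← humap, card_map] at this; exact this
      have husum : u.sum ∈ H := by
        have h0 : π u.sum = 0 := by
          rw [AddMonoidHom.map_multiset_sum, humap, hUsum]
        rwa [hπ, QuotientAddGroup.mk'_apply, QuotientAddGroup.eq_zero_iff] at h0
      have hmle : m ≤ Multiset.card S := hucard ▸ card_le_card hule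
      obtain ⟨B', hB'card, hB'le, hB'⟩ := ih (S - u) (by
        rw [card_sub hule, hucard]
        have : (j + 1) * m = j * m + m := by ring
        omega)
      refine ⟨u ::ₘ B', by simp [hB'card], ?_, ?_⟩
      · rw [join_cons]
        calc u + B'.join ≤ u + (S - u) := add_le_add le_rfl hB'le
          _ = S := by rw [add_comm, tsub_add_cancel_of_le hule]
      · intro T hT
        rcases mem_cons.1 hT with rfl | hT
        · exact ⟨hucard, husum⟩
        · exact hB' T hT
  -- main argument: show the RHS is in the defining set
  refine Nat.sInf_le ?_
  intro S hS
  obtain ⟨B, hBcard, hBle, hB⟩ := blocks sH S (by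
    rw [hS]
    rcases Nat.eq_zero_or_pos sH with h0 | h1
    · simp [h0]
    · have h3 : sH - 1 + 1 = sH := Nat.sub_add_cancel h1
      have h2 : sH * m = m * (sH - 1) + m := by
        calc sH * m = (sH - 1 + 1) * m := by rw [h3]
          _ = m * (sH - 1) + m := by ring
      omega)
  -- the multiset of block sums, in H
  obtain ⟨V, hVle, hVcard, hVsum⟩ := egz_spec
    (B.attach.map (fun (T : {x // x ∈ B}) => (⟨T.1.sum, (hB T.1 T.2).2⟩ : H)))
    (by simp [hBcard, hsH])
  obtain ⟨C, hCle, hCmap⟩ := exists_le_of_le_map V B.attach hVle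
  have hDle : C.map Subtype.val ≤ B :=
    calc C.map Subtype.val ≤ B.attach.map Subtype.val := map_le_map hCle
      _ = B := attach_map_val B
  have hDmem : ∀ T ∈ C.map Subtype.val, Multiset.card T = m ∧ T.sum ∈ H :=
    fun T hT => hB T (mem_of_le hDle hT)
  have hDcard : Multiset.card (C.map Subtype.val) = AddMonoid.exponent H := by
    rw [card_map, ← hVcard, ← hCmap, card_map]
  refine ⟨(C.map Subtype.val).join, ?_, ?_, ?_⟩
  · -- join mono
    obtain ⟨E, hE⟩ := Multiset.le_iff_exists_add.1 hDle
    calc (C.map Subtype.val).join ≤ (C.map Subtype.val).join + E.join := le_add_right _ _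
      _ = (C.map Subtype.val + E).join := (join_add _ E).symm
      _ = B.join := by rw [← hE]
      _ ≤ S := hBle
  · rw [card_join]
    have : (C.map Subtype.val).map Multiset.card
        = Multiset.replicate (Multiset.card (C.map Subtype.val)) m := by
      rw [eq_replicate]
      exact ⟨by rw [card_map], fun b hb => by
        obtain ⟨T, hT, rfl⟩ := mem_map.1 hb; exact (hDmem T hT).1⟩
    rw [this, sum_replicate, smul_eq_mul, hDcard, hexp]
  · -- sum is zero
    have key : (C.map Subtype.val).map Multiset.sum = V.map (H.subtype) := by
      rw [← hCmap, map_map, map_map]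
      rfl
    rw [sum_join, key, ← AddMonoidHom.map_multiset_sum, hVsum, AddMonoidHom.map_zero]
end

section
/- Let G be a non-trivial finite abelian group, and suppose G ≅ G₁ × ⋯ × G_m where the exponents exp(G₁), …, exp(G_m) are pairwise relatively prime. Then 𝔰(G) ≤ Σ_{i=1}^{m} exp(G₁) ⋯ exp(G_{i−1}) · 𝔰(G_i), where the empty product for i = 1 is 1. -/
open Multiset Finset

/-- The defining set of the EGZ constant. -/
def EGZset (G : Type*) [AddCommMonoid G] : Set ℕ :=
  {k | ∀ S : Multiset G, Multiset.card S = k →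
    ∃ T ≤ S, Multiset.card T = AddMonoid.exponent G ∧ T.sum = 0}

theorem EGZ_eq (G : Type*) [AddCommMonoid G] : EGZ G = sInf (EGZset G) := rfl

theorem exists_le_card' {α : Type*} (s : Multiset α) {n : ℕ} (h : n ≤ Multiset.card s) :
    ∃ t ≤ s, Multiset.card t = n := by
  refine ⟨(s.toList.take n : List α), ?_, ?_⟩
  · have h1 : List.Sublist (s.toList.take n) s.toList := List.take_sublist _ _
    have h2 : ((s.toList.take n : List α) : Multiset α) ≤ (s.toList : Multiset α) :=
      Multiset.coe_le.2 h1.subperm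
    rwa [s.coe_toList] at h2
  · rw [Multiset.coe_card, List.length_take, Multiset.length_toList]
    omega

theorem exists_map_le' {α β : Type*} {f : α → β} {s : Multiset α} {t : Multiset β}
    (h : t ≤ s.map f) : ∃ u ≤ s, u.map f = t := by
  obtain ⟨l, rfl⟩ : ∃ l : List α, (l : Multiset α) = s := ⟨s.toList, s.coe_toList⟩
  obtain ⟨lt, rfl⟩ : ∃ lt : List β, (lt : Multiset β) = t := ⟨t.toList, t.coe_toList⟩
  rw [Multiset.map_coe, Multiset.coe_le] at h
  obtain ⟨l'', hperm, hsub⟩ := h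
  obtain ⟨l₁, hsl, hmap⟩ := List.sublist_map_iff.1 hsub
  refine ⟨(l₁ : Multiset α), Multiset.coe_le.2 hsl.subperm, ?_⟩
  rw [Multiset.map_coe, ← hmap]
  exact Quot.sound hperm

theorem EGZset_mono {G : Type*} [AddCommMonoid G] {k l : ℕ} (hk : k ∈ EGZset G) (hkl : k ≤ l) :
    l ∈ EGZset G := by
  intro S hS
  obtain ⟨S', hS'le, hS'card⟩ := exists_le_card' (n := k) S (by rw [hS]; exact hkl)
  obtain ⟨T, hT, h1, h2⟩ := hk S' hS'card
  exact ⟨T, hT.trans hS'le, h1, h2⟩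

theorem EGZset_nonempty_mem (G : Type*) [AddCommGroup G] [Finite G] :
    (AddMonoid.exponent G * Nat.card G) ∈ EGZset G := by
  have : Fintype G := Fintype.ofFinite G
  classical
  intro S hS
  have hexp : AddMonoid.exponent G ≠ 0 := AddMonoid.exponent_ne_zero_of_finite
  obtain ⟨e', he'⟩ : ∃ e', AddMonoid.exponent G = e' + 1 := ⟨AddMonoid.exponent G - 1, by omega⟩
  have hg : ∃ g : G, AddMonoid.exponent G ≤ S.count g := by
    by_contra hc
    push_neg at hc
    have h1 : Multiset.card S ≤ ∑ g ∈ S.toFinset, e' := by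
      rw [← Multiset.toFinset_sum_count_eq]
      exact Finset.sum_le_sum fun g _ => by have := hc g; omega
    rw [Finset.sum_const, smul_eq_mul] at h1
    have h3 : S.toFinset.card ≤ Fintype.card G := Finset.card_le_univ _
    have h4 : 0 < Fintype.card G := Fintype.card_pos
    rw [hS, Nat.card_eq_fintype_card, he'] at h1
    have h5 : S.toFinset.card * e' ≤ Fintype.card G * e' := Nat.mul_le_mul_right _ h3
    nlinarith
  obtain ⟨g, hg⟩ := hg
  refine ⟨Multiset.replicate (AddMonoid.exponent G) g,
    Multiset.le_count_iff_replicate_le.1 hg, by simp, ?_⟩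
  rw [Multiset.sum_replicate]
  exact AddMonoid.exponent_nsmul_eq_zero g

theorem egz_mem (G : Type*) [AddCommGroup G] [Finite G] : EGZ G ∈ EGZset G := by
  rw [EGZ_eq]
  exact Nat.sInf_mem ⟨_, EGZset_nonempty_mem G⟩

theorem EGZset_congr {A B : Type*} [AddCommMonoid A] [AddCommMonoid B] (e : A ≃+ B) {k : ℕ}
    (hk : k ∈ EGZset A) : k ∈ EGZset B := by
  intro S hS
  obtain ⟨T, hTle, hTcard, hTsum⟩ := hk (S.map e.symm) (by simpa using hS)
  refine ⟨T.map e, ?_, ?_, ?_⟩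
  · have h := Multiset.map_le_map (f := e) hTle
    rwa [Multiset.map_map, show (⇑e ∘ ⇑e.symm) = id from funext fun x => e.apply_symm_apply x,
      Multiset.map_id] at h
  · rw [Multiset.card_map, hTcard, AddMonoid.exponent_eq_of_addEquiv e]
  · rw [← map_multiset_sum e T, hTsum]
    exact map_zero e

theorem card_multiset_sum {α : Type*} (S : Multiset (Multiset α)) :
    Multiset.card S.sum = (S.map Multiset.card).sum :=
  Multiset.card_join S

theorem pair_mem {A B : Type*} [AddCommGroup A] [AddCommGroup B] [Finite A] [Finite B]
    (h : Nat.Coprime (AddMonoid.exponent A) (AddMonoid.exponent B)) {kA kB : ℕ}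
    (hA : kA ∈ EGZset A) (hB : kB ∈ EGZset B) :
    kA + AddMonoid.exponent A * kB ∈ EGZset (A × B) := by
  classical
  intro S hS
  have extract : ∀ n (S : Multiset (A × B)), kA + AddMonoid.exponent A * n ≤ Multiset.card S →
      ∃ Ts : Multiset (Multiset (A × B)), Multiset.card Ts = n ∧ Ts.sum ≤ S ∧
        ∀ T ∈ Ts, Multiset.card T = AddMonoid.exponent A ∧ (T.map Prod.fst).sum = 0 := by
    intro n
    induction n with
    | zero => exact fun S _ => ⟨0, rfl, by simp, by simp⟩
    | succ n ih =>
      intro S hle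
      obtain ⟨S', hS'le, hS'card⟩ := exists_le_card' (n := kA) S (le_trans (Nat.le_add_right _ _) hle)
      obtain ⟨T', hT'le, hT'card, hT'sum⟩ := hA (S'.map Prod.fst) (by rw [Multiset.card_map, hS'card])
      obtain ⟨T, hTle, rfl⟩ := exists_map_le' hT'le
      have hTS : T ≤ S := hTle.trans hS'le
      have hTcard : Multiset.card T = AddMonoid.exponent A := by
        rw [Multiset.card_map] at hT'card; exact hT'card
      obtain ⟨Ts, hTs1, hTs2, hTs3⟩ := ih (S - T) (by
        rw [Multiset.card_sub hTS, hTcard]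
        have h2 : kA + AddMonoid.exponent A * (n + 1)
            = (kA + AddMonoid.exponent A * n) + AddMonoid.exponent A := by ring
        omega)
      refine ⟨T ::ₘ Ts, by simp [hTs1], ?_, ?_⟩
      · rw [Multiset.sum_cons, add_comm]
        calc Ts.sum + T ≤ (S - T) + T := add_le_add hTs2 le_rfl
          _ = S := tsub_add_cancel_of_le hTS
      · intro U hU
        rcases Multiset.mem_cons.1 hU with rfl | hU
        · exact ⟨hTcard, hT'sum⟩
        · exact hTs3 U hU
  obtain ⟨Ts, hTs1, hTs2, hTs3⟩ := extract kB S (le_of_eq hS.symm)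
  obtain ⟨W, hWle, hWcard, hWsum⟩ :=
    hB (Ts.map fun T => (T.map Prod.snd).sum) (by rw [Multiset.card_map, hTs1])
  obtain ⟨Ts', hTs'le, rfl⟩ := exists_map_le' hWle
  have hmemTs : ∀ T ∈ Ts', Multiset.card T = AddMonoid.exponent A ∧ (T.map Prod.fst).sum = 0 :=
    fun T hT => hTs3 T (Multiset.mem_of_le hTs'le hT)
  have hcardTs' : Multiset.card Ts' = AddMonoid.exponent B := by
    rw [Multiset.card_map] at hWcard; exact hWcard
  have hexpAB : AddMonoid.exponent (A × B) = AddMonoid.exponent A * AddMonoid.exponent B := by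
    rw [AddMonoid.exponent_prod, lcm_eq_nat_lcm, Nat.Coprime.lcm_eq_mul h]
  refine ⟨Ts'.sum, ?_, ?_, ?_⟩
  · obtain ⟨D, rfl⟩ := Multiset.le_iff_exists_add.1 hTs'le
    calc Ts'.sum ≤ Ts'.sum + D.sum := Multiset.le_add_right _ _
      _ = (Ts' + D).sum := (Multiset.sum_add _ _).symm
      _ ≤ S := hTs2
  · rw [card_multiset_sum, hexpAB]
    have : Ts'.map Multiset.card
        = Multiset.replicate (Multiset.card Ts') (AddMonoid.exponent A) := by
      rw [Multiset.eq_replicate]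
      refine ⟨Multiset.card_map _ _, ?_⟩
      intro b hb
      obtain ⟨T, hT, rfl⟩ := Multiset.mem_map.1 hb
      exact (hmemTs T hT).1
    rw [this, Multiset.sum_replicate, smul_eq_mul, hcardTs', mul_comm]
  · have hsum : Ts'.sum.sum = (Ts'.map Multiset.sum).sum := by
      refine Multiset.induction_on Ts' (by simp) fun T Ts ih => ?_
      rw [Multiset.sum_cons, Multiset.map_cons, Multiset.sum_cons, Multiset.sum_add, ih]
    rw [hsum]
    refine Prod.ext ?_ ?_
    · rw [show ((Ts'.map Multiset.sum).sum).1
          = ((Ts'.map Multiset.sum).map Prod.fst).sum from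
            map_multiset_sum (AddMonoidHom.fst A B) _]
      rw [Multiset.map_map]
      have : Ts'.map (Prod.fst ∘ Multiset.sum) = Multiset.replicate (Multiset.card Ts') 0 := by
        rw [Multiset.eq_replicate]
        refine ⟨Multiset.card_map _ _, ?_⟩
        intro b hb
        obtain ⟨T, hT, rfl⟩ := Multiset.mem_map.1 hb
        show T.sum.1 = 0
        rw [show (T.sum).1 = (T.map Prod.fst).sum from map_multiset_sum (AddMonoidHom.fst A B) _]
        exact (hmemTs T hT).2
      rw [this, Multiset.sum_replicate, smul_zero]
      rfl
    · rw [show ((Ts'.map Multiset.sum).sum).2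
          = ((Ts'.map Multiset.sum).map Prod.snd).sum from
            map_multiset_sum (AddMonoidHom.snd A B) _]
      rw [Multiset.map_map]
      have : Ts'.map (Prod.snd ∘ Multiset.sum) = Ts'.map fun T => (T.map Prod.snd).sum := by
        refine Multiset.map_congr rfl fun T _ => ?_
        exact map_multiset_sum (AddMonoidHom.snd A B) T
      rw [this, hWsum]
      rfl

/-- Splitting off the first coordinate of a finite product of additive groups. -/
def splitAddEquiv {m : ℕ} (α : Fin (m + 1) → Type*) [∀ i, AddCommMonoid (α i)] :
    (∀ i, α i) ≃+ α 0 × (∀ i : Fin m, α i.succ) where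
  toFun f := (f 0, fun i => f i.succ)
  invFun p := Fin.cons p.1 p.2
  left_inv f := funext fun i => Fin.cases rfl (fun _ => rfl) i
  right_inv p := rfl
  map_add' f g := rfl

theorem main_lemma : ∀ (m : ℕ) (Gi : Fin (m + 1) → Type u) [∀ i, AddCommGroup (Gi i)]
    [∀ i, Finite (Gi i)],
    (∀ i j, i ≠ j → Nat.Coprime (AddMonoid.exponent (Gi i)) (AddMonoid.exponent (Gi j))) →
    (∑ i : Fin (m + 1),
      (∏ j ∈ Finset.univ.filter (fun j => j < i), AddMonoid.exponent (Gi j)) * EGZ (Gi i))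
      ∈ EGZset (∀ i, Gi i) := by
  intro m
  induction m with
  | zero =>
    intro Gi _ _ _
    have hsum : (∑ i : Fin 1,
        (∏ j ∈ Finset.univ.filter (fun j => j < i), AddMonoid.exponent (Gi j)) * EGZ (Gi i))
        = EGZ (Gi 0) := by
      rw [Fin.sum_univ_one]
      have : (Finset.univ.filter (fun j : Fin 1 => j < 0)) = ∅ := by decide
      rw [this, Finset.prod_empty, one_mul]
    rw [hsum]
    let eq0 : (∀ i : Fin (0 + 1), Gi i) ≃+ Gi 0 :=
      { toFun := fun f => f 0
        invFun := fun x i => Fin.cases x (fun j => j.elim0) i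
        left_inv := fun f => funext fun i => Fin.cases (by simp) (fun j => j.elim0) i
        right_inv := fun x => by simp
        map_add' := fun f g => rfl }
    exact EGZset_congr eq0.symm (egz_mem (Gi 0))
  | succ m ih =>
    intro Gi _ _ hcop
    have hcop' : ∀ i j : Fin (m + 1), i ≠ j →
        Nat.Coprime (AddMonoid.exponent (Gi i.succ)) (AddMonoid.exponent (Gi j.succ)) :=
      fun i j hij => hcop i.succ j.succ (fun hc => hij (Fin.succ_injective _ hc))
    have hB := ih (fun i => Gi i.succ) hcop'
    have hA := egz_mem (Gi 0)
    have hc : Nat.Coprime (AddMonoid.exponent (Gi 0))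
        (AddMonoid.exponent (∀ i : Fin (m + 1), Gi i.succ)) := by
      rw [AddMonoid.exponent_pi]
      have hdvd : Finset.lcm Finset.univ (fun i : Fin (m + 1) => AddMonoid.exponent (Gi i.succ))
          ∣ ∏ i : Fin (m + 1), AddMonoid.exponent (Gi i.succ) :=
        Finset.lcm_dvd fun i _ => Finset.dvd_prod_of_mem _ (Finset.mem_univ i)
      refine Nat.Coprime.coprime_dvd_right hdvd ?_
      exact Nat.Coprime.prod_right fun i _ => hcop 0 i.succ (Fin.succ_ne_zero i).symm
    have hmem := pair_mem hc hA hB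
    have key : ∀ i : Fin (m + 1),
        (∏ j ∈ Finset.univ.filter (fun j => j < i.succ), AddMonoid.exponent (Gi j))
        = AddMonoid.exponent (Gi 0) *
          ∏ j ∈ Finset.univ.filter (fun j => j < i), AddMonoid.exponent (Gi j.succ) := by
      intro i
      rw [Finset.prod_filter, Finset.prod_filter, Fin.prod_univ_succ]
      simp [Fin.succ_lt_succ_iff, Fin.succ_pos]
    have hsum : (∑ i : Fin (m + 2),
        (∏ j ∈ Finset.univ.filter (fun j => j < i), AddMonoid.exponent (Gi j)) * EGZ (Gi i))
        = EGZ (Gi 0) + AddMonoid.exponent (Gi 0) * (∑ i : Fin (m + 1),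
          (∏ j ∈ Finset.univ.filter (fun j => j < i), AddMonoid.exponent (Gi j.succ))
            * EGZ (Gi i.succ)) := by
      rw [Fin.sum_univ_succ]
      have h0 : (Finset.univ.filter (fun j : Fin (m + 2) => j < 0)) = ∅ := by
        apply Finset.filter_false_of_mem
        intro j _
        exact Fin.not_lt_zero j
      rw [h0, Finset.prod_empty, one_mul, Finset.mul_sum]
      congr 1
      refine Finset.sum_congr rfl fun i _ => ?_
      rw [key i, mul_assoc]
    rw [hsum]
    exact EGZset_congr (splitAddEquiv Gi).symm hmem

theorem stmt_6 (m : ℕ) (G : Type*) [AddCommGroup G] [Finite G] [Nontrivial G]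
    (Gi : Fin m → Type*) [∀ i, AddCommGroup (Gi i)] [∀ i, Finite (Gi i)]
    (e : G ≃+ ∀ i, Gi i)
    (hcop : ∀ i j, i ≠ j →
      Nat.Coprime (AddMonoid.exponent (Gi i)) (AddMonoid.exponent (Gi j))) :
    EGZ G ≤ ∑ i : Fin m,
      (∏ j ∈ Finset.univ.filter (fun j => j < i), AddMonoid.exponent (Gi j)) *
        EGZ (Gi i) := by
  cases m with
  | zero =>
    exfalso
    have : Subsingleton (∀ i : Fin 0, Gi i) := ⟨fun a b => funext fun i => i.elim0⟩
    have : Subsingleton G := e.toEquiv.subsingleton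
    exact not_subsingleton G this
  | succ m =>
    rw [EGZ_eq]
    exact Nat.sInf_le (EGZset_congr e.symm (main_lemma m Gi hcop))
end

section
/- Let k = p₁^{α₁} ⋯ p_r^{α_r} be the prime factorization of k ≥ 2, and let n ≥ 1. Then 𝔰((ℤ/kℤ)^n) < k · ( 𝔰(𝔽_{p₁}^n)/(p₁ − 1) + ⋯ + 𝔰(𝔽_{p_r}^n)/(p_r − 1) ). -/
def ZS (G : Type*) [AddCommMonoid G] (m k : ℕ) : Prop :=
  ∀ S : Multiset G, Multiset.card S = k →
    ∃ T ≤ S, Multiset.card T = m ∧ T.sum = 0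

lemma exp_pi (n q : ℕ) (hn : 1 ≤ n) : AddMonoid.exponent (Fin n → ZMod q) = q := by
  rw [AddMonoid.exponent_pi]
  simp only [ZMod.exponent]
  refine Nat.dvd_antisymm (Finset.lcm_dvd fun i _ => dvd_rfl) ?_
  exact Finset.dvd_lcm (f := fun _ : Fin n => q) (Finset.mem_univ (⟨0, hn⟩ : Fin n))

lemma EGZ_eq_s7 (n q : ℕ) (hn : 1 ≤ n) :
    EGZ (Fin n → ZMod q) = sInf {k | ZS (Fin n → ZMod q) q k} := by
  unfold EGZ ZS
  rw [exp_pi n q hn]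

lemma zs_pigeonhole {G : Type*} [AddCommMonoid G] [Fintype G] [DecidableEq G]
    (m : ℕ) (hm : 1 ≤ m) (hexp : ∀ g : G, m • g = 0) :
    ZS G m (Fintype.card G * (m - 1) + 1) := by
  intro S hS
  have : ∃ a : G, m ≤ S.count a := by
    by_contra hcon
    push_neg at hcon
    have hle : Multiset.card S ≤ Fintype.card G * (m - 1) := by
      calc Multiset.card S = ∑ a ∈ S.toFinset, S.count a := (Multiset.toFinset_sum_count_eq S).symm
        _ ≤ ∑ a ∈ S.toFinset, (m - 1) := Finset.sum_le_sum (fun a _ => by have := hcon a; omega)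
        _ = S.toFinset.card * (m - 1) := by rw [Finset.sum_const, smul_eq_mul]
        _ ≤ Fintype.card G * (m - 1) :=
            Nat.mul_le_mul_right _ (S.toFinset.card_le_univ)
    omega
  obtain ⟨a, ha⟩ := this
  refine ⟨Multiset.replicate m a, Multiset.le_count_iff_replicate_le.1 ha, ?_, ?_⟩
  · simp
  · rw [Multiset.sum_replicate]; exact hexp a
lemma exists_sub {α : Type*} (s : Multiset α) (m : ℕ) (h : m ≤ Multiset.card s) :
    ∃ t ≤ s, Multiset.card t = m := by
  have h1 : Multiset.powersetCard m s ≠ 0 := by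
    intro h0
    have := Multiset.card_powersetCard m s
    rw [h0] at this
    simp at this
    exact absurd this.symm (Nat.choose_pos h).ne'
  obtain ⟨t, ht⟩ := Multiset.exists_mem_of_ne_zero h1
  rw [Multiset.mem_powersetCard] at ht
  exact ⟨t, ht.1, ht.2⟩

lemma exists_map_eq {α β : Type*} {f : α → β} :
    ∀ {s : Multiset α} {t : Multiset β}, t ≤ s.map f → ∃ u, u ≤ s ∧ u.map f = t := by
  classical
  intro s
  induction s using Multiset.induction_on with
  | empty =>
    intro t ht
    rw [Multiset.map_zero, Multiset.le_zero] at ht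
    exact ⟨0, le_refl _, by simp [ht]⟩
  | cons a s ih =>
    intro t ht
    rw [Multiset.map_cons] at ht
    by_cases h : f a ∈ t
    · obtain ⟨t', rfl⟩ : ∃ t', t = f a ::ₘ t' := ⟨t.erase (f a), (Multiset.cons_erase h).symm⟩
      obtain ⟨u, hu, hmap⟩ := ih ((Multiset.cons_le_cons_iff _).1 ht)
      exact ⟨a ::ₘ u, Multiset.cons_le_cons _ hu, by simp [hmap]⟩
    · obtain ⟨u, hu, hmap⟩ := ih ((Multiset.le_cons_of_notMem h).1 ht)
      exact ⟨u, hu.trans (Multiset.le_cons_self _ _), hmap⟩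

lemma blocks {G : Type*} [AddCommMonoid G] [DecidableEq G] (P : Multiset G → Prop) (a sa : ℕ)
    (ha : 1 ≤ a)
    (hP : ∀ S : Multiset G, sa ≤ Multiset.card S → ∃ B ≤ S, Multiset.card B = a ∧ P B) :
    ∀ (j : ℕ) (S : Multiset G), sa + a * j ≤ Multiset.card S + a →
      ∃ L : List (Multiset G), L.length = j ∧ (↑L : Multiset (Multiset G)).sum ≤ S ∧
        ∀ B ∈ L, Multiset.card B = a ∧ P B := by
  intro j
  induction j with
  | zero => intro S _; exact ⟨[], rfl, by simp, by simp⟩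
  | succ j ih =>
    intro S hS
    have hsa : sa ≤ Multiset.card S := by
      have : a * (j + 1) = a * j + a := by ring
      have h2 : 0 ≤ a * j := Nat.zero_le _
      omega
    obtain ⟨B, hBS, hBcard, hBP⟩ := hP S hsa
    have haS : a ≤ Multiset.card S := hBcard ▸ Multiset.card_le_card hBS
    obtain ⟨L, hlen, hsum, hprop⟩ := ih (S - B) (by
      rw [Multiset.card_sub hBS, hBcard]
      have : a * (j + 1) = a * j + a := by ring
      omega)
    refine ⟨B :: L, by simp [hlen], ?_, ?_⟩
    · have : (↑(B :: L) : Multiset (Multiset G)).sum = B + (↑L : Multiset (Multiset G)).sum := by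
        simp
      rw [this]
      exact (le_tsub_iff_left hBS).1 hsum
    · intro C hC
      rcases List.mem_cons.1 hC with h | h
      · exact h ▸ ⟨hBcard, hBP⟩
      · exact hprop C h

lemma sum_le_sum_of_le {G : Type*} [AddCommMonoid G] {s t : Multiset (Multiset G)} (h : s ≤ t) :
    s.sum ≤ t.sum := by
  obtain ⟨d, rfl⟩ := Multiset.le_iff_exists_add.1 h
  rw [Multiset.sum_add]
  exact le_add_right (le_refl _)

lemma cast_zero_imp {N b : ℕ} [NeZero N] (hb : b ∣ N) (x : ZMod N)
    (h : ZMod.castHom hb (ZMod b) x = 0) : ∃ y : ZMod N, x = b * y := by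
  haveI : NeZero b := ⟨fun h0 => (NeZero.ne N) (by simpa [h0] using hb)⟩
  rw [ZMod.castHom_apply, ← ZMod.natCast_val, ZMod.natCast_eq_zero_iff] at h
  obtain ⟨c, hc⟩ := h
  refine ⟨(c : ZMod N), ?_⟩
  calc x = ((x.val : ℕ) : ZMod N) := (ZMod.natCast_rightInverse x).symm
    _ = ((b * c : ℕ) : ZMod N) := by rw [hc]
    _ = (b : ZMod N) * c := by push_cast; ring

lemma nsmul_sum' {G : Type*} [AddCommMonoid G] (a : ℕ) (s : Multiset G) :
    (s.map (fun x => a • x)).sum = a • s.sum := by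
  induction s using Multiset.induction_on with
  | empty => simp
  | cons c s ih => simp [ih, smul_add]

lemma reduction (n a b sa sb : ℕ) (ha : 2 ≤ a) (hb : 2 ≤ b) (hsb : 1 ≤ sb)
    (Ha : ZS (Fin n → ZMod a) a sa) (Hb : ZS (Fin n → ZMod b) b sb) :
    ZS (Fin n → ZMod (a * b)) (a * b) (a * (sb - 1) + sa) := by
  haveI : NeZero (a * b) := ⟨by positivity⟩
  have hdvda : a ∣ a * b := ⟨b, rfl⟩
  have hdvdb : b ∣ a * b := ⟨a, mul_comm a b⟩
  set G := (Fin n → ZMod (a * b)) with hG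
  let ψ : G →+ (Fin n → ZMod a) :=
    AddMonoidHom.mk' (fun v i => ZMod.castHom hdvda (ZMod a) (v i))
      (fun x y => by funext i; exact map_add (ZMod.castHom hdvda (ZMod a)) (x i) (y i))
  let χ : G →+ (Fin n → ZMod b) :=
    AddMonoidHom.mk' (fun v i => ZMod.castHom hdvdb (ZMod b) (v i))
      (fun x y => by funext i; exact map_add (ZMod.castHom hdvdb (ZMod b)) (x i) (y i))
  -- pointwise division lemmas
  have hdiv_a : ∀ v : G, ψ v = 0 → ∃ w : G, v = a • w := by
    intro v hv
    have : ∀ i, ∃ y : ZMod (a * b), v i = a * y := by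
      intro i
      apply cast_zero_imp hdvda
      exact congrFun hv i
    choose y hy using this
    refine ⟨y, funext fun i => ?_⟩
    rw [Pi.smul_apply, nsmul_eq_mul]
    exact hy i
  have hdiv_b : ∀ v : G, χ v = 0 → ∃ w : G, v = b • w := by
    intro v hv
    have : ∀ i, ∃ y : ZMod (a * b), v i = b * y := by
      intro i
      apply cast_zero_imp hdvdb
      exact congrFun hv i
    choose y hy using this
    refine ⟨y, funext fun i => ?_⟩
    rw [Pi.smul_apply, nsmul_eq_mul]
    exact hy i
  -- block existence
  have hP : ∀ S : Multiset G, sa ≤ Multiset.card S →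
      ∃ B ≤ S, Multiset.card B = a ∧ ∃ w : G, B.sum = a • w := by
    intro S hS
    obtain ⟨S₀, hS₀, hcard₀⟩ := exists_sub S sa hS
    obtain ⟨T, hT, hTcard, hTsum⟩ := Ha (S₀.map ψ) (by rw [Multiset.card_map]; exact hcard₀)
    obtain ⟨B, hB, hBmap⟩ := exists_map_eq hT
    refine ⟨B, hB.trans hS₀, by rw [← Multiset.card_map (⇑ψ) B, hBmap]; exact hTcard, ?_⟩
    apply hdiv_a
    rw [map_multiset_sum, hBmap, hTsum]
  intro S hScard
  obtain ⟨L, hlen, hsumle, hprop⟩ := blocks (fun B => ∃ w : G, B.sum = a • w) a sa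
    (by omega) hP sb S (by
      rw [hScard]
      have h1 : a * (sb - 1) + a = a * sb := by
        cases sb with
        | zero => omega
        | succ m => simp [Nat.mul_succ]
      omega)
  -- choice function for the witnesses
  let f : Multiset G → G := fun B => if h : ∃ w : G, B.sum = a • w then h.choose else 0
  have hf : ∀ B ∈ L, B.sum = a • f B := by
    intro B hB
    have h := (hprop B hB).2
    simp only [f, dif_pos h]
    exact h.choose_spec
  -- apply Hb to the images of the witnesses
  have hMcard : Multiset.card ((↑L : Multiset (Multiset G)).map (fun B => χ (f B))) = sb := by
    rw [Multiset.card_map, Multiset.coe_card, hlen]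
  obtain ⟨T, hT, hTcard, hTsum⟩ := Hb _ hMcard
  obtain ⟨Q, hQ, hQmap⟩ := exists_map_eq hT
  refine ⟨Q.sum, (sum_le_sum_of_le hQ).trans hsumle, ?_, ?_⟩
  · -- cardinality
    have hjj : Q.sum = Q.join := rfl
    rw [hjj, Multiset.card_join]
    have hQcard : Multiset.card Q = b := by
      rw [← Multiset.card_map (fun B => χ (f B)) Q, hQmap]; exact hTcard
    have : Q.map Multiset.card = Multiset.replicate b a := by
      rw [Multiset.eq_replicate]
      constructor
      · rw [Multiset.card_map]; exact hQcard
      · intro x hx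
        obtain ⟨B, hBQ, rfl⟩ := Multiset.mem_map.1 hx
        exact (hprop B (Multiset.mem_coe.1 (Multiset.mem_of_le hQ hBQ))).1
    rw [this, Multiset.sum_replicate, smul_eq_mul, mul_comm]
  · -- sum is zero
    have hmem : ∀ B ∈ Q, B ∈ L := fun B hB => Multiset.mem_coe.1 (Multiset.mem_of_le hQ hB)
    have hjoin : Q.sum.sum = (Multiset.map Multiset.sum Q).sum :=
      map_multiset_sum Multiset.sumAddMonoidHom Q
    have hsum1 : Q.sum.sum = (Q.map (fun B => a • f B)).sum := by
      rw [hjoin]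
      congr 1
      exact Multiset.map_congr rfl (fun B hB => hf B (hmem B hB))
    set w : G := (Q.map f).sum with hw
    have hsum2 : (Q.map (fun B => a • f B)).sum = a • w := by
      rw [hw]
      have h1 : Q.map (fun B => a • f B) = (Q.map f).map (fun x => a • x) := by
        rw [Multiset.map_map]; rfl
      rw [h1]
      exact nsmul_sum' a (Q.map f)
    have hχw : χ w = 0 := by
      rw [hw, map_multiset_sum, Multiset.map_map]
      rw [show (⇑χ ∘ f) = (fun B => χ (f B)) from rfl, hQmap, hTsum]
    obtain ⟨v, hv⟩ := hdiv_b w hχw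
    rw [hsum1, hsum2, hv, smul_smul]
    funext i
    rw [Pi.smul_apply, Pi.zero_apply, nsmul_eq_mul, ZMod.natCast_self, zero_mul]

noncomputable def cc (k p : ℕ) : ℝ :=
  ((k : ℝ) - (k : ℝ) / (p : ℝ) ^ (k.factorization p)) / ((p : ℝ) - 1)

lemma key (s : ℕ → ℕ)
    (hpos : ∀ q, 2 ≤ q → 1 ≤ s q)
    (hrec : ∀ a b, 2 ≤ a → 2 ≤ b → s (a * b) ≤ a * (s b - 1) + s a) :
    ∀ k, 2 ≤ k → (s k : ℝ) ≤ 1 + ∑ p ∈ k.primeFactors, cc k p * ((s p : ℝ) - 1) := by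
  intro k
  induction k using Nat.strong_induction_on with
  | _ k ih =>
  intro hk
  set p := k.minFac with hpdef
  have hp : p.Prime := Nat.minFac_prime (by omega)
  have hp2 : 2 ≤ p := hp.two_le
  have hpdvd : p ∣ k := Nat.minFac_dvd k
  obtain ⟨m, hkm⟩ : ∃ m, k = p * m := hpdvd
  have hm1 : 1 ≤ m := by
    rcases Nat.eq_zero_or_pos m with h | h
    · subst h; simp at hkm; omega
    · exact h
  have hPne : (p : ℝ) - 1 ≠ 0 := by
    have : (2 : ℝ) ≤ (p : ℝ) := by exact_mod_cast hp2
    linarith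
  have hPpos : (0:ℝ) < (p:ℝ) := by positivity
  rcases eq_or_lt_of_le hm1 with hm | hm2
  · -- k = p, prime case
    have hkp : k = p := by rw [hkm, ← hm, mul_one]
    have hkprime : k.Prime := by rw [hkp]; exact hp
    have hkne : (k : ℝ) - 1 ≠ 0 := by
      have : (2 : ℝ) ≤ (k : ℝ) := by exact_mod_cast hk
      linarith
    rw [Nat.Prime.primeFactors hkprime, Finset.sum_singleton]
    have hfact : k.factorization k = 1 := Nat.Prime.factorization_self hkprime
    rw [cc, hfact, pow_one]
    have hkpos : (0:ℝ) < (k:ℝ) := by positivity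
    have : (k : ℝ) - (k : ℝ) / (k : ℝ) = (k : ℝ) - 1 := by
      rw [div_self (ne_of_gt hkpos)]
    rw [this, div_self hkne, one_mul]
    linarith
  · -- composite case : m ≥ 2
    have hm2' : 2 ≤ m := hm2
    have hmk : m < k := by
      calc m < 2 * m := by omega
        _ ≤ p * m := Nat.mul_le_mul_right m hp2
        _ = k := hkm.symm
    have hrec' := hrec p m hp2 hm2'
    have hsm1 : 1 ≤ s m := hpos m hm2'
    have h1 : (s k : ℝ) ≤ (p : ℝ) * ((s m : ℝ) - 1) + (s p : ℝ) := by
      rw [hkm]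
      have := hrec'
      have hcast : ((s (p * m)) : ℝ) ≤ ((p * (s m - 1) + s p : ℕ) : ℝ) := by exact_mod_cast this
      calc ((s (p*m)) : ℝ) ≤ ((p * (s m - 1) + s p : ℕ) : ℝ) := hcast
        _ = (p : ℝ) * ((s m : ℝ) - 1) + (s p : ℝ) := by
            push_cast [Nat.cast_sub hsm1]
            ring
    have hIH := ih m hmk hm2'
    have hm0 : m ≠ 0 := by omega
    have hp0 : p ≠ 0 := by omega
    -- prime factor sets
    have hPF : k.primeFactors = insert p m.primeFactors := by
      rw [hkm, Nat.primeFactors_mul hp0 hm0, Nat.Prime.primeFactors hp]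
      rfl
    -- c identity for q ≠ p in PF m
    have hcq : ∀ q ∈ m.primeFactors, q ≠ p → cc k q = (p : ℝ) * cc m q := by
      intro q hq hqp
      have hfq : k.factorization q = m.factorization q := by
        rw [hkm, Nat.factorization_mul hp0 hm0]
        simp [Nat.Prime.factorization hp, Finsupp.single_apply, hqp.symm]
      rw [cc, cc, hfq, hkm]
      push_cast
      ring
    rcases Finset.decidableMem p m.primeFactors with hpm | hpm
    · -- p ∉ PF m
      have hfp : k.factorization p = 1 := by
        rw [hkm, Nat.factorization_mul hp0 hm0]
        have h2 : m.factorization p = 0 := by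
          rw [Nat.factorization_eq_zero_iff]
          right; left
          exact fun hdvd => hpm (Nat.mem_primeFactors.2 ⟨hp, hdvd, hm0⟩)
        simp [Nat.Prime.factorization hp, h2]
      have hcp : cc k p = (m : ℝ) := by
        rw [cc, hfp, pow_one, hkm]
        push_cast
        rw [mul_comm (p:ℝ) (m:ℝ), mul_div_assoc, div_self (ne_of_gt hPpos), mul_one]
        rw [show (m:ℝ) * (p:ℝ) - (m:ℝ) = (m:ℝ) * ((p:ℝ) - 1) by ring]
        rw [mul_div_assoc, div_self hPne, mul_one]
      rw [hPF, Finset.sum_insert hpm, hcp]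
      have hsum : ∑ q ∈ m.primeFactors, cc k q * ((s q : ℝ) - 1)
          = (p : ℝ) * ∑ q ∈ m.primeFactors, cc m q * ((s q : ℝ) - 1) := by
        rw [Finset.mul_sum]
        refine Finset.sum_congr rfl fun q hq => ?_
        have hqp : q ≠ p := fun h => hpm (h ▸ hq)
        rw [hcq q hq hqp]; ring
      rw [hsum]
      have hsp1 : (1:ℝ) ≤ (s p : ℝ) := by exact_mod_cast hpos p hp2
      have hmR : (1:ℝ) ≤ (m:ℝ) := by exact_mod_cast hm1
      nlinarith [hIH, hPpos]
    · -- p ∈ PF m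
      have hpfk : k.primeFactors = m.primeFactors := by
        rw [hPF, Finset.insert_eq_self.2 hpm]
      set e := m.factorization p with he
      have he1 : 1 ≤ e := (Nat.Prime.pow_dvd_iff_le_factorization hp hm0).1 (by
        rw [pow_one]; exact Nat.dvd_of_mem_primeFactors hpm)
      have hfp : k.factorization p = e + 1 := by
        rw [hkm, Nat.factorization_mul hp0 hm0]
        simp [Nat.Prime.factorization hp, he]
        ring
      -- c_p(k) = p * c_p(m) + k / p^(e+1)
      have hEpos : (0:ℝ) < (p:ℝ)^e := by positivity
      have hcpk : cc k p = (p:ℝ) * cc m p + (k:ℝ) / (p:ℝ)^(e+1) := by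
        rw [cc, cc, hfp, ← he, hkm]
        push_cast
        field_simp
        ring
      -- k / p^(e+1) ≥ 1
      have hdvdpe : p ^ (e + 1) ∣ k := by
        rw [← hfp]; exact Nat.ordProj_dvd k p
      have hge1 : (1:ℝ) ≤ (k:ℝ) / (p:ℝ)^(e+1) := by
        have hle : (p:ℕ) ^ (e+1) ≤ k := Nat.le_of_dvd (by omega) hdvdpe
        rw [le_div_iff₀ (by positivity)]
        rw [one_mul]
        exact_mod_cast hle
      rw [hpfk]
      have hsp1 : (1:ℝ) ≤ (s p : ℝ) := by exact_mod_cast hpos p hp2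
      -- split p from both sums
      have hsplit1 : ∑ q ∈ m.primeFactors, cc k q * ((s q : ℝ) - 1)
          = ∑ q ∈ m.primeFactors.erase p, cc k q * ((s q : ℝ) - 1) + cc k p * ((s p : ℝ) - 1) :=
        (Finset.sum_erase_add _ _ hpm).symm
      have hsplit2 : ∑ q ∈ m.primeFactors, cc m q * ((s q : ℝ) - 1)
          = ∑ q ∈ m.primeFactors.erase p, cc m q * ((s q : ℝ) - 1) + cc m p * ((s p : ℝ) - 1) :=
        (Finset.sum_erase_add _ _ hpm).symm
      have hsum : ∑ q ∈ m.primeFactors.erase p, cc k q * ((s q : ℝ) - 1)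
          = (p : ℝ) * ∑ q ∈ m.primeFactors.erase p, cc m q * ((s q : ℝ) - 1) := by
        rw [Finset.mul_sum]
        refine Finset.sum_congr rfl fun q hq => ?_
        rw [hcq q (Finset.mem_of_mem_erase hq) (Finset.ne_of_mem_erase hq)]; ring
      rw [hsplit1, hsum]
      rw [hsplit2] at hIH
      nlinarith [hIH, hcpk, hge1, hsp1, hPpos]

theorem stmt_7 (k n : ℕ) (hk : 2 ≤ k) (hn : 1 ≤ n) :
    (EGZ (Fin n → ZMod k) : ℝ) <
      (k : ℝ) * ∑ p ∈ k.primeFactors, (EGZ (Fin n → ZMod p) : ℝ) / ((p : ℝ) - 1) := by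
  classical
  set s : ℕ → ℕ := fun q => EGZ (Fin n → ZMod q) with hs
  have hZS : ∀ q, 2 ≤ q → ZS (Fin n → ZMod q) q (s q) := by
    intro q hq
    haveI : NeZero q := ⟨by omega⟩
    have hmem : ZS (Fin n → ZMod q) q (Fintype.card (Fin n → ZMod q) * (q - 1) + 1) := by
      apply zs_pigeonhole q (by omega)
      intro g
      funext i
      rw [Pi.smul_apply, nsmul_eq_mul, ZMod.natCast_self, zero_mul, Pi.zero_apply]
    have hne : {kk | ZS (Fin n → ZMod q) q kk}.Nonempty := ⟨_, hmem⟩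
    have : s q = sInf {kk | ZS (Fin n → ZMod q) q kk} := EGZ_eq_s7 n q hn
    rw [this]
    exact Nat.sInf_mem hne
  have hpos : ∀ q, 2 ≤ q → 1 ≤ s q := by
    intro q hq
    by_contra hcon
    have h0 : s q = 0 := by omega
    obtain ⟨T, hT, hcard, -⟩ := hZS q hq 0 (by simp [h0])
    rw [Multiset.le_zero] at hT
    rw [hT] at hcard
    simp at hcard
    omega
  have hrec : ∀ a b, 2 ≤ a → 2 ≤ b → s (a * b) ≤ a * (s b - 1) + s a := by
    intro a b ha hb
    have hred := reduction n a b (s a) (s b) ha hb (hpos b hb) (hZS a ha) (hZS b hb)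
    have : s (a * b) = sInf {kk | ZS (Fin n → ZMod (a * b)) (a * b) kk} := EGZ_eq_s7 n (a * b) hn
    rw [this]
    exact Nat.sInf_le hred
  have hkey := key s hpos hrec k hk
  have hfin : (1:ℝ) + ∑ p ∈ k.primeFactors, cc k p * ((s p : ℝ) - 1)
      < (k:ℝ) * ∑ p ∈ k.primeFactors, (s p : ℝ) / ((p:ℝ) - 1) := by
    have hk1 : (0:ℝ) < (k:ℝ) - 1 := by
      have : (2:ℝ) ≤ (k:ℝ) := by exact_mod_cast hk
      linarith
    have hkpos : (0:ℝ) < (k:ℝ) := by positivity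
    have hterm : ∀ p ∈ k.primeFactors,
        cc k p * ((s p :ℝ) - 1) + (k:ℝ)/((k:ℝ)-1) ≤ (k:ℝ) * ((s p : ℝ) / ((p:ℝ)-1)) := by
      intro p hpmem
      have hp : p.Prime := Nat.prime_of_mem_primeFactors hpmem
      have hp2 : 2 ≤ p := hp.two_le
      have hpk : p ≤ k := Nat.le_of_dvd (by omega) (Nat.dvd_of_mem_primeFactors hpmem)
      have hp1 : (0:ℝ) < (p:ℝ) - 1 := by
        have : (2:ℝ) ≤ (p:ℝ) := by exact_mod_cast hp2
        linarith
      have hsp1 : (1:ℝ) ≤ (s p : ℝ) := by exact_mod_cast hpos p hp2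
      have hge1 : (1:ℝ) ≤ (k:ℝ) / (p:ℝ) ^ (k.factorization p) := by
        have hdvd : p ^ (k.factorization p) ∣ k := Nat.ordProj_dvd k p
        have hle : (p:ℕ) ^ (k.factorization p) ≤ k := Nat.le_of_dvd (by omega) hdvd
        rw [le_div_iff₀ (by positivity), one_mul]
        exact_mod_cast hle
      have hA : cc k p ≤ ((k:ℝ) - 1) / ((p:ℝ) - 1) := by
        rw [cc, div_le_div_iff₀ hp1 hp1]
        nlinarith
      have hB : (k:ℝ)/((k:ℝ)-1) ≤ (k:ℝ)/((p:ℝ)-1) := by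
        apply div_le_div_of_nonneg_left (le_of_lt hkpos) hp1
        have : (p:ℝ) ≤ (k:ℝ) := by exact_mod_cast hpk
        linarith
      have h3 : cc k p * ((s p :ℝ) - 1) ≤ (((k:ℝ)-1)/((p:ℝ)-1)) * ((s p :ℝ) - 1) :=
        mul_le_mul_of_nonneg_right hA (by linarith)
      have h4 : (((k:ℝ)-1)/((p:ℝ)-1)) * ((s p :ℝ) - 1) + (k:ℝ)/((p:ℝ)-1)
          ≤ (k:ℝ) * ((s p : ℝ) / ((p:ℝ)-1)) := by
        rw [div_mul_eq_mul_div, ← add_div, mul_div_assoc']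
        gcongr
        nlinarith
      linarith
    have hsum := Finset.sum_le_sum hterm
    rw [Finset.sum_add_distrib, Finset.sum_const, nsmul_eq_mul] at hsum
    have hcard : 1 ≤ k.primeFactors.card :=
      Finset.card_pos.2 (Nat.nonempty_primeFactors.2 (by omega))
    have hgt1 : (1:ℝ) < (k:ℝ)/((k:ℝ)-1) := by
      rw [lt_div_iff₀ hk1]; linarith
    have hbig : (1:ℝ) < (k.primeFactors.card : ℝ) * ((k:ℝ)/((k:ℝ)-1)) := by
      have hc : (1:ℝ) ≤ (k.primeFactors.card : ℝ) := by exact_mod_cast hcard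
      nlinarith
    rw [Finset.mul_sum]
    linarith [hsum, hbig]
  calc (EGZ (Fin n → ZMod k) : ℝ) = (s k : ℝ) := rfl
    _ ≤ 1 + ∑ p ∈ k.primeFactors, cc k p * ((s p : ℝ) - 1) := hkey
    _ < (k:ℝ) * ∑ p ∈ k.primeFactors, (s p : ℝ) / ((p:ℝ) - 1) := hfin
end

section
/- Let q ≥ 1, n ≥ 1, and d ≥ 0 be natural numbers. Then for every real x with 0 < x < 1, the number of vectors v ∈ {0, 1, …, q − 1}^n with Σ_{i=1}^n v_i ≤ d is at most ((1 − x^q)/(1 − x))^n · x^{−d}. -/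
theorem stmt_8 (q n d : ℕ) (hq : 1 ≤ q) (hn : 1 ≤ n)
    (x : ℝ) (hx0 : 0 < x) (hx1 : x < 1) :
    ((((Fintype.piFinset fun _ : Fin n => Finset.range q)).filter
        (fun v : Fin n → ℕ => ∑ i, v i ≤ d)).card : ℝ) ≤
      ((1 - x ^ q) / (1 - x)) ^ n * x ^ (-(d : ℤ)) := by
  set S := ((Fintype.piFinset fun _ : Fin n => Finset.range q)).filter
      (fun v : Fin n → ℕ => ∑ i, v i ≤ d) with hS
  have hxd : (0:ℝ) < x ^ d := pow_pos hx0 d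
  have key : (S.card : ℝ) * x ^ d ≤ ((1 - x ^ q) / (1 - x)) ^ n := by
    have h1 : (S.card : ℝ) * x ^ d ≤ ∑ v ∈ S, x ^ (∑ i, v i) := by
      rw [Finset.card_eq_sum_ones, Nat.cast_sum, Finset.sum_mul]
      apply Finset.sum_le_sum
      intro v hv
      simp only [Nat.cast_one, one_mul]
      exact pow_le_pow_of_le_one hx0.le hx1.le (Finset.mem_filter.mp hv).2
    have h2 : ∑ v ∈ S, x ^ (∑ i, v i) ≤
        ∑ v ∈ Fintype.piFinset fun _ : Fin n => Finset.range q, x ^ (∑ i, v i) := by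
      apply Finset.sum_le_sum_of_subset_of_nonneg (Finset.filter_subset _ _)
      intro v _ _
      positivity
    have h3 : ∑ v ∈ Fintype.piFinset fun _ : Fin n => Finset.range q, x ^ (∑ i, v i)
        = ((1 - x ^ q) / (1 - x)) ^ n := by
      simp_rw [← Finset.prod_pow_eq_pow_sum]
      rw [← Finset.prod_univ_sum (fun _ : Fin n => Finset.range q)
        (fun _ (k : ℕ) => x ^ k)]
      have hgeom : ∑ k ∈ Finset.range q, x ^ k = (1 - x ^ q) / (1 - x) := by
        rw [geom_sum_eq (by linarith)]
        rw [div_eq_div_iff (by linarith) (by linarith)]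
        ring
      simp [hgeom, div_pow]
    calc (S.card : ℝ) * x ^ d ≤ _ := h1
      _ ≤ _ := h2
      _ = _ := h3
  rw [zpow_neg, zpow_natCast, ← div_eq_mul_inv, le_div_iff₀ hxd]
  exact key
end

section
/- Let X be a set, k ≥ 3, and x : Fin k → X. Define R_k(x) = Σ sgn(σ) · [x ∘ σ = x], where the sum in ℤ ranges over all permutations σ ∈ S_k whose cycle decomposition (counting fixed points as cycles, i.e., counting orbits on Fin k) has at least 3 cycles. Then: (i) R_k(x) = 1 if x₁, …, x_k are pairwise distinct; (ii) R_k(x) = (−1)^{k−1} · Σ_{j=2}^{k−1} (k−1)!/j if x₁ = ⋯ = x_k; (iii) R_k(x) = (−1)^{k−1} · #{σ ∈ S_k with exactly 2 orbits on Fin k such that x ∘ σ = x} if x₁, …, x_k take on exactly 2 distinct values; (iv) R_k(x) = 0 otherwise (i.e., if x takes at least 3 distinct values but is not injective). -/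
/-- The number of cycles of a permutation of `Fin k`, counting fixed points as cycles
(i.e. the number of orbits of `σ` on `Fin k`). -/
def orbitCount {k : ℕ} (σ : Equiv.Perm (Fin k)) : ℕ :=
  (Finset.univ.filter fun i => σ i = i).card + Multiset.card σ.cycleType

/-- `R_k(x) = ∑ sgn(σ) · [x ∘ σ = x]`, summed over permutations with at least 3 cycles. -/
def Rk {X : Type*} [DecidableEq X] {k : ℕ} (x : Fin k → X) : ℤ :=
  ∑ σ ∈ Finset.univ.filter (fun σ : Equiv.Perm (Fin k) => 3 ≤ orbitCount σ),
    (Equiv.Perm.sign σ : ℤ) * (if ∀ i, x (σ i) = x i then 1 else 0)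

open Equiv Equiv.Perm Finset

section Orb

variable {k : ℕ}

/-- The orbit of `i` under `σ`, as a finset. -/
def orb (σ : Perm (Fin k)) (i : Fin k) : Finset (Fin k) :=
  Finset.univ.filter (σ.SameCycle i)

lemma mem_orb {σ : Perm (Fin k)} {i j : Fin k} : j ∈ orb σ i ↔ σ.SameCycle i j := by
  simp [orb]

lemma sameCycle_of_pow {σ : Perm (Fin k)} {i j : Fin k} (m : ℕ) (h : (σ ^ m) i = j) :
    σ.SameCycle i j := ⟨(m : ℤ), by simpa using h⟩

lemma orb_of_fixed {σ : Perm (Fin k)} {i : Fin k} (h : σ i = i) : orb σ i = {i} := by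
  ext j
  simp only [mem_orb, Finset.mem_singleton]
  constructor
  · intro hc
    obtain ⟨m, -, hm⟩ := hc.exists_pow_eq'
    rw [pow_apply_eq_self_of_apply_eq_self h] at hm
    exact hm.symm
  · rintro rfl; exact Equiv.Perm.SameCycle.refl _ _

lemma orb_of_not_fixed {σ : Perm (Fin k)} {i : Fin k} (h : σ i ≠ i) :
    orb σ i = (σ.cycleOf i).support := by
  ext j
  rw [mem_orb, Equiv.Perm.mem_support_cycleOf_iff,
    and_iff_left (Equiv.Perm.mem_support.2 h)]

lemma orb_nonempty (σ : Perm (Fin k)) (i : Fin k) : (orb σ i).Nonempty :=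
  ⟨i, mem_orb.2 (Equiv.Perm.SameCycle.refl _ _)⟩

/-- The orbit count equals the number of distinct orbits. -/
lemma orbitCount_eq_card_image (σ : Perm (Fin k)) :
    orbitCount σ = (Finset.univ.image (orb σ)).card := by
  classical
  set F := Finset.univ.filter (fun i : Fin k => σ i = i) with hF
  set M := Finset.univ.filter (fun i : Fin k => ¬ σ i = i) with hM
  have himg : Finset.univ.image (orb σ) = F.image (orb σ) ∪ M.image (orb σ) := by
    rw [← Finset.image_union, Finset.filter_union_filter_not_eq]
  have h1 : F.image (orb σ) = F.image (fun i => ({i} : Finset (Fin k))) := by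
    apply Finset.image_congr
    intro i hi
    exact orb_of_fixed (by simpa [hF] using hi)
  have h1c : (F.image (fun i => ({i} : Finset (Fin k)))).card = F.card :=
    Finset.card_image_of_injective _ Finset.singleton_injective
  have h2 : M.image (orb σ) = σ.cycleFactorsFinset.image Equiv.Perm.support := by
    ext b
    simp only [Finset.mem_image]
    constructor
    · rintro ⟨i, hi, rfl⟩
      have hi' : σ i ≠ i := by simpa [hM] using hi
      exact ⟨σ.cycleOf i,
        Equiv.Perm.cycleOf_mem_cycleFactorsFinset_iff.mpr (Equiv.Perm.mem_support.2 hi'),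
        (orb_of_not_fixed hi').symm⟩
    · rintro ⟨c, hc, rfl⟩
      have hc' := Equiv.Perm.mem_cycleFactorsFinset_iff.mp hc
      obtain ⟨a, ha, -⟩ := hc'.1
      have hasup : a ∈ c.support := Equiv.Perm.mem_support.2 ha
      have haσ : σ a ≠ a := by
        rw [← hc'.2 a hasup]; exact ha
      refine ⟨a, by simp [hM, haσ], ?_⟩
      rw [orb_of_not_fixed haσ, ← Equiv.Perm.cycle_is_cycleOf hasup hc]
  have h2c : (σ.cycleFactorsFinset.image Equiv.Perm.support).card = σ.cycleFactorsFinset.card := by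
    apply Finset.card_image_of_injOn
    intro c hc d hd hcd
    obtain ⟨a, ha, -⟩ := (Equiv.Perm.mem_cycleFactorsFinset_iff.mp hc).1
    have hac : a ∈ c.support := Equiv.Perm.mem_support.2 ha
    have had : a ∈ d.support := by rw [← hcd]; exact hac
    rw [Equiv.Perm.cycle_is_cycleOf hac hc, Equiv.Perm.cycle_is_cycleOf had hd]
  have hdisj : Disjoint (F.image (fun i => ({i} : Finset (Fin k))))
      (σ.cycleFactorsFinset.image Equiv.Perm.support) := by
    rw [Finset.disjoint_left]
    rintro b hb1 hb2
    obtain ⟨i, hi, rfl⟩ := Finset.mem_image.1 hb1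
    obtain ⟨c, hc, hcb⟩ := Finset.mem_image.1 hb2
    have hi' : σ i = i := by simpa [hF] using hi
    have : i ∈ c.support := by rw [hcb]; exact Finset.mem_singleton_self i
    have := (Equiv.Perm.mem_cycleFactorsFinset_iff.mp hc).2 i this
    have hne := Equiv.Perm.mem_support.1 (by rw [hcb]; exact Finset.mem_singleton_self i)
    exact hne (this.trans hi')
  have hctcard : Multiset.card σ.cycleType = σ.cycleFactorsFinset.card := by
    rw [Equiv.Perm.cycleType_def, Multiset.card_map]; rfl
  rw [himg, h1, h2, Finset.card_union_of_disjoint hdisj, h1c, h2c, orbitCount, hctcard]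

/-- If `x` is invariant under powers of `σ` then ... -/
lemma invariant_pow {X : Type*} {x : Fin k → X} {σ : Perm (Fin k)}
    (h : ∀ i, x (σ i) = x i) : ∀ (m : ℕ) (i : Fin k), x ((σ ^ m) i) = x i := by
  intro m
  induction m with
  | zero => simp
  | succ m ih =>
    intro i
    rw [pow_succ, Equiv.Perm.mul_apply, ih (σ i), h i]

/-- If `x` is invariant under `σ` then it is constant on orbits. -/
lemma invariant_of_sameCycle {X : Type*} {x : Fin k → X} {σ : Perm (Fin k)}
    (h : ∀ i, x (σ i) = x i) {i j : Fin k} (hc : σ.SameCycle i j) : x j = x i := by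
  obtain ⟨m, -, hm⟩ := hc.exists_pow_eq'
  rw [← hm, invariant_pow h]

lemma card_image_le_orbitCount {X : Type*} [DecidableEq X] (x : Fin k → X) (σ : Perm (Fin k))
    (h : ∀ i, x (σ i) = x i) : (Finset.univ.image x).card ≤ orbitCount σ := by
  classical
  rcases (Finset.univ.image x).eq_empty_or_nonempty with he | hne
  · simp [he]
  obtain ⟨v0, hv0⟩ := hne
  obtain ⟨i0, -, rfl⟩ := Finset.mem_image.1 hv0
  rw [orbitCount_eq_card_image]
  apply Finset.card_le_card_of_surjOn
    (fun b : Finset (Fin k) => if hb : b.Nonempty then x (b.min' hb) else x i0)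
  intro v hv
  obtain ⟨i, -, rfl⟩ := Finset.mem_image.1 hv
  refine ⟨orb σ i, Finset.mem_coe.2 (Finset.mem_image_of_mem _ (Finset.mem_univ i)), ?_⟩
  have hne : (orb σ i).Nonempty := orb_nonempty σ i
  simp only [dif_pos hne]
  exact invariant_of_sameCycle h (mem_orb.1 ((orb σ i).min'_mem hne))

end Orb

section Decompose

variable {n : ℕ}

/-! ### The case `p = 0` -/

lemma decomposeFin_zero_succ (e : Perm (Fin n)) (i : Fin n) :
    (Equiv.Perm.decomposeFin.symm ((0 : Fin (n + 1)), e)) i.succ = (e i).succ := by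
  rw [Equiv.Perm.decomposeFin_symm_apply_succ, Equiv.swap_self]
  rfl

lemma decomposeFin_zero_pow (e : Perm (Fin n)) :
    ∀ (m : ℕ) (i : Fin n),
      ((Equiv.Perm.decomposeFin.symm ((0 : Fin (n + 1)), e)) ^ m) i.succ = ((e ^ m) i).succ := by
  intro m
  induction m with
  | zero => intro i; simp
  | succ m ih =>
    intro i
    rw [pow_succ, pow_succ, Equiv.Perm.mul_apply, Equiv.Perm.mul_apply,
      decomposeFin_zero_succ, ih]

lemma decomposeFin_zero_fix (e : Perm (Fin n)) :
    (Equiv.Perm.decomposeFin.symm ((0 : Fin (n + 1)), e)) 0 = 0 :=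
  Equiv.Perm.decomposeFin_symm_apply_zero 0 e

lemma orb_decomposeFin_zero_zero (e : Perm (Fin n)) :
    orb (Equiv.Perm.decomposeFin.symm ((0 : Fin (n + 1)), e)) 0 = {0} :=
  orb_of_fixed (decomposeFin_zero_fix e)

lemma orb_decomposeFin_zero_succ (e : Perm (Fin n)) (i : Fin n) :
    orb (Equiv.Perm.decomposeFin.symm ((0 : Fin (n + 1)), e)) i.succ
      = (orb e i).image Fin.succ := by
  ext b
  induction b using Fin.cases with
  | zero =>
    simp only [mem_orb, Finset.mem_image]
    constructor
    · intro hc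
      exfalso
      have h2 := mem_orb.2 hc.symm
      rw [orb_decomposeFin_zero_zero] at h2
      exact Fin.succ_ne_zero i (Finset.mem_singleton.1 h2)
    · rintro ⟨j, -, hj0⟩
      exact absurd hj0 (Fin.succ_ne_zero j)
  | succ j =>
    simp only [mem_orb, Finset.mem_image]
    constructor
    · intro hc
      obtain ⟨m, -, hm⟩ := hc.exists_pow_eq'
      rw [decomposeFin_zero_pow] at hm
      exact ⟨j, sameCycle_of_pow m (Fin.succ_injective _ hm), rfl⟩
    · rintro ⟨j', hj', hjeq⟩
      have hj'j : j' = j := Fin.succ_injective _ hjeq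
      subst hj'j
      obtain ⟨m, -, hm⟩ := hj'.exists_pow_eq'
      exact sameCycle_of_pow m (by rw [decomposeFin_zero_pow, hm])

/-! ### The case `p = q.succ` -/

lemma decomposeFin_succ_zero (q : Fin n) (e : Perm (Fin n)) :
    (Equiv.Perm.decomposeFin.symm (Fin.succ q, e)) 0 = q.succ :=
  Equiv.Perm.decomposeFin_symm_apply_zero _ _

lemma decomposeFin_succ_succ (q : Fin n) (e : Perm (Fin n)) (i : Fin n) :
    (Equiv.Perm.decomposeFin.symm (Fin.succ q, e)) i.succ
      = if e i = q then 0 else (e i).succ := by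
  rw [Equiv.Perm.decomposeFin_symm_apply_succ]
  by_cases h : e i = q
  · rw [if_pos h, h]
    exact Equiv.swap_apply_right _ _
  · rw [if_neg h]
    exact Equiv.swap_apply_of_ne_of_ne (Fin.succ_ne_zero _)
      (fun hc => h (Fin.succ_injective _ hc))

lemma sameCycle_succ_apply (q : Fin n) (e : Perm (Fin n)) (i : Fin n) :
    (Equiv.Perm.decomposeFin.symm (Fin.succ q, e)).SameCycle i.succ (e i).succ := by
  by_cases h : e i = q
  · apply sameCycle_of_pow 2
    rw [pow_two, Equiv.Perm.mul_apply, decomposeFin_succ_succ, if_pos h,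
      decomposeFin_succ_zero, h]
  · exact sameCycle_of_pow 1 (by rw [pow_one, decomposeFin_succ_succ, if_neg h])

lemma sameCycle_succ_pow (q : Fin n) (e : Perm (Fin n)) (m : ℕ) (i : Fin n) :
    (Equiv.Perm.decomposeFin.symm (Fin.succ q, e)).SameCycle i.succ ((e ^ m) i).succ := by
  induction m with
  | zero => simpa using Equiv.Perm.SameCycle.refl _ _
  | succ m ih =>
    have h2 := sameCycle_succ_apply q e ((e ^ m) i)
    rw [← Equiv.Perm.mul_apply, ← pow_succ'] at h2
    exact ih.trans h2

lemma sameCycle_succ_of_sameCycle (q : Fin n) (e : Perm (Fin n)) {i j : Fin n}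
    (h : e.SameCycle i j) :
    (Equiv.Perm.decomposeFin.symm (Fin.succ q, e)).SameCycle i.succ j.succ := by
  obtain ⟨m, -, hm⟩ := h.exists_pow_eq'
  rw [← hm]
  exact sameCycle_succ_pow q e m i

lemma decomposeFin_succ_pow_converse (q : Fin n) (e : Perm (Fin n)) :
    ∀ m : ℕ,
      (∀ i j : Fin n,
        ((Equiv.Perm.decomposeFin.symm (Fin.succ q, e)) ^ m) i.succ = j.succ →
          e.SameCycle i j) ∧
      (∀ j : Fin n,
        ((Equiv.Perm.decomposeFin.symm (Fin.succ q, e)) ^ m) 0 = j.succ →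
          e.SameCycle q j) := by
  intro m
  induction m with
  | zero =>
    constructor
    · intro i j h
      rw [pow_zero, Equiv.Perm.one_apply] at h
      rw [Fin.succ_injective _ h]
    · intro j h
      rw [pow_zero, Equiv.Perm.one_apply] at h
      exact absurd h.symm (Fin.succ_ne_zero j)
  | succ m ih =>
    constructor
    · intro i j h
      rw [pow_succ, Equiv.Perm.mul_apply] at h
      by_cases hq : e i = q
      · rw [decomposeFin_succ_succ, if_pos hq] at h
        exact Equiv.Perm.SameCycle.trans ⟨1, by simpa using hq⟩ (ih.2 j h)
      · rw [decomposeFin_succ_succ, if_neg hq] at h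
        exact Equiv.Perm.SameCycle.trans ⟨1, by simp⟩ (ih.1 (e i) j h)
    · intro j h
      rw [pow_succ, Equiv.Perm.mul_apply, decomposeFin_succ_zero] at h
      exact ih.1 q j h

lemma orb_decomposeFin_succ_zero (q : Fin n) (e : Perm (Fin n)) :
    orb (Equiv.Perm.decomposeFin.symm (Fin.succ q, e)) 0
      = insert 0 ((orb e q).image Fin.succ) := by
  ext b
  induction b using Fin.cases with
  | zero =>
    simp only [mem_orb, Finset.mem_insert, Finset.mem_image, eq_self_iff_true, true_or,
      iff_true]
    exact Equiv.Perm.SameCycle.refl _ _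
  | succ j =>
    simp only [mem_orb, Finset.mem_insert, Finset.mem_image]
    constructor
    · intro hc
      obtain ⟨m, -, hm⟩ := hc.exists_pow_eq'
      exact Or.inr ⟨j, (decomposeFin_succ_pow_converse q e m).2 j hm, rfl⟩
    · rintro (h0 | ⟨j', hj', hjeq⟩)
      · exact absurd h0 (Fin.succ_ne_zero j)
      · have hj'j : j' = j := Fin.succ_injective _ hjeq
        subst hj'j
        have h1 : (Equiv.Perm.decomposeFin.symm (Fin.succ q, e)).SameCycle 0 (Fin.succ q) :=
          sameCycle_of_pow 1 (by rw [pow_one, decomposeFin_succ_zero])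
        exact h1.trans (sameCycle_succ_of_sameCycle q e hj')

lemma orb_decomposeFin_succ_succ (q : Fin n) (e : Perm (Fin n)) (i : Fin n) :
    orb (Equiv.Perm.decomposeFin.symm (Fin.succ q, e)) i.succ
      = if q ∈ orb e i then insert 0 ((orb e i).image Fin.succ)
        else (orb e i).image Fin.succ := by
  have hzero_iff :
      (Equiv.Perm.decomposeFin.symm (Fin.succ q, e)).SameCycle i.succ 0 ↔ e.SameCycle i q := by
    constructor
    · intro hc
      obtain ⟨m, -, hm⟩ := hc.symm.exists_pow_eq'
      exact ((decomposeFin_succ_pow_converse q e m).2 i hm).symm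
    · intro hc
      have h1 : (Equiv.Perm.decomposeFin.symm (Fin.succ q, e)).SameCycle 0 (Fin.succ q) :=
        sameCycle_of_pow 1 (by rw [pow_one, decomposeFin_succ_zero])
      exact (h1.trans (sameCycle_succ_of_sameCycle q e hc.symm)).symm
  have hsucc_iff : ∀ j : Fin n,
      (Equiv.Perm.decomposeFin.symm (Fin.succ q, e)).SameCycle i.succ j.succ
        ↔ e.SameCycle i j := by
    intro j
    constructor
    · intro hc
      obtain ⟨m, -, hm⟩ := hc.exists_pow_eq'
      exact (decomposeFin_succ_pow_converse q e m).1 i j hm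
    · exact sameCycle_succ_of_sameCycle q e
  ext b
  induction b using Fin.cases with
  | zero =>
    rw [mem_orb, hzero_iff]
    by_cases hq : q ∈ orb e i
    · rw [if_pos hq]
      simp only [Finset.mem_insert, eq_self_iff_true, true_or, iff_true]
      exact mem_orb.1 hq
    · rw [if_neg hq]
      constructor
      · intro h; exact absurd (mem_orb.2 h) hq
      · intro h
        obtain ⟨j, -, hj⟩ := Finset.mem_image.1 h
        exact absurd hj (Fin.succ_ne_zero j)
  | succ j =>
    rw [mem_orb, hsucc_iff]
    by_cases hq : q ∈ orb e i
    · rw [if_pos hq]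
      simp only [Finset.mem_insert, Finset.mem_image, mem_orb]
      constructor
      · intro h; exact Or.inr ⟨j, h, rfl⟩
      · rintro (h0 | ⟨a, ha, haeq⟩)
        · exact absurd h0 (Fin.succ_ne_zero j)
        · rwa [← Fin.succ_injective _ haeq]
    · rw [if_neg hq]
      simp only [Finset.mem_image, mem_orb]
      constructor
      · intro h; exact ⟨j, h, rfl⟩
      · rintro ⟨a, ha, haeq⟩
        rwa [← Fin.succ_injective _ haeq]

lemma zero_not_mem_image_succ (s : Finset (Fin n)) :
    (0 : Fin (n + 1)) ∉ s.image Fin.succ := by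
  intro h
  obtain ⟨j, -, hj⟩ := Finset.mem_image.1 h
  exact Fin.succ_ne_zero j hj

/-- Key surgery lemma: the orbit count of the decomposition. -/
lemma orbitCount_decomposeFin (p : Fin (n + 1)) (e : Perm (Fin n)) :
    orbitCount (Equiv.Perm.decomposeFin.symm (p, e)) =
      orbitCount e + if p = 0 then 1 else 0 := by
  rcases Fin.eq_zero_or_eq_succ p with rfl | ⟨q, rfl⟩
  · rw [if_pos rfl, orbitCount_eq_card_image, orbitCount_eq_card_image]
    have hsplitu : Finset.univ.image (orb (Equiv.Perm.decomposeFin.symm ((0 : Fin (n+1)), e)))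
        = insert (orb (Equiv.Perm.decomposeFin.symm ((0 : Fin (n+1)), e)) 0)
          (Finset.univ.image fun i : Fin n =>
            orb (Equiv.Perm.decomposeFin.symm ((0 : Fin (n+1)), e)) i.succ) := by
      rw [Fin.univ_succ, Finset.cons_eq_insert, Finset.image_insert, Finset.map_eq_image,
        Finset.image_image]
      rfl
    have hsucc : (Finset.univ.image fun i : Fin n =>
          orb (Equiv.Perm.decomposeFin.symm ((0 : Fin (n+1)), e)) i.succ)
        = (Finset.univ.image (orb e)).image (fun s => s.image Fin.succ) := by
      rw [Finset.image_image]
      apply Finset.image_congr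
      intro i _
      exact orb_decomposeFin_zero_succ e i
    rw [hsplitu, hsucc, orb_decomposeFin_zero_zero]
    rw [Finset.card_insert_of_notMem, Finset.card_image_of_injective _
      (Finset.image_injective (Fin.succ_injective n))]
    intro hmem
    obtain ⟨s, hs, hs0⟩ := Finset.mem_image.1 hmem
    have h0 : (0 : Fin (n + 1)) ∈ s.image Fin.succ := by
      rw [hs0]; exact Finset.mem_singleton_self _
    exact zero_not_mem_image_succ s h0
  · rw [if_neg (Fin.succ_ne_zero q), orbitCount_eq_card_image, orbitCount_eq_card_image, add_zero]
    set G : Finset (Fin n) → Finset (Fin (n + 1)) :=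
      fun s => if q ∈ s then insert 0 (s.image Fin.succ) else s.image Fin.succ with hG
    have hsplitu : Finset.univ.image (orb (Equiv.Perm.decomposeFin.symm (Fin.succ q, e)))
        = insert (orb (Equiv.Perm.decomposeFin.symm (Fin.succ q, e)) 0)
          (Finset.univ.image fun i : Fin n =>
            orb (Equiv.Perm.decomposeFin.symm (Fin.succ q, e)) i.succ) := by
      rw [Fin.univ_succ, Finset.cons_eq_insert, Finset.image_insert, Finset.map_eq_image,
        Finset.image_image]
      rfl
    have h0 : orb (Equiv.Perm.decomposeFin.symm (Fin.succ q, e)) 0 = G (orb e q) := by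
      rw [orb_decomposeFin_succ_zero, hG]
      simp only
      rw [if_pos (mem_orb.2 (Equiv.Perm.SameCycle.refl _ _))]
    have hsucc : (Finset.univ.image fun i : Fin n =>
          orb (Equiv.Perm.decomposeFin.symm (Fin.succ q, e)) i.succ)
        = (Finset.univ.image (orb e)).image G := by
      rw [Finset.image_image]
      apply Finset.image_congr
      intro i _
      simp only [hG, Function.comp_apply]
      exact orb_decomposeFin_succ_succ q e i
    have hins : insert (G (orb e q)) ((Finset.univ.image (orb e)).image G)
        = (Finset.univ.image (orb e)).image G :=
      Finset.insert_eq_self.2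
        (Finset.mem_image_of_mem G (Finset.mem_image_of_mem _ (Finset.mem_univ q)))
    rw [hsplitu, h0, hsucc, hins]
    · apply Finset.card_image_of_injOn
      intro s hs t ht hst
      obtain ⟨a, -, rfl⟩ := Finset.mem_image.1 (Finset.mem_coe.1 hs)
      obtain ⟨b, -, rfl⟩ := Finset.mem_image.1 (Finset.mem_coe.1 ht)
      rw [hG] at hst
      simp only at hst
      by_cases ha : q ∈ orb e a <;> by_cases hb : q ∈ orb e b
      · rw [if_pos ha, if_pos hb] at hst
        have h2 := congrArg (fun s => Finset.erase s (0 : Fin (n + 1))) hst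
        rw [Finset.erase_insert (zero_not_mem_image_succ _),
          Finset.erase_insert (zero_not_mem_image_succ _)] at h2
        exact Finset.image_injective (Fin.succ_injective n) h2
      · rw [if_pos ha, if_neg hb] at hst
        exact absurd (hst ▸ Finset.mem_insert_self 0 _) (zero_not_mem_image_succ _)
      · rw [if_neg ha, if_pos hb] at hst
        exact absurd (hst.symm ▸ Finset.mem_insert_self 0 _) (zero_not_mem_image_succ _)
      · rw [if_neg ha, if_neg hb] at hst
        exact Finset.image_injective (Fin.succ_injective n) hst

end Decompose

section Counting

/-- The number of permutations of `Fin n` with exactly `c` orbits. -/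
def cnt (n c : ℕ) : ℕ :=
  (Finset.univ.filter fun σ : Perm (Fin n) => orbitCount σ = c).card

lemma orbitCount_one (n : ℕ) : orbitCount (1 : Perm (Fin n)) = n := by
  simp [orbitCount, Equiv.Perm.cycleType_one]

lemma one_le_orbitCount {n : ℕ} (hn : 0 < n) (σ : Perm (Fin n)) : 1 ≤ orbitCount σ := by
  by_cases h1 : σ = 1
  · rw [h1, orbitCount_one]; exact hn
  · have := Equiv.Perm.card_cycleType_pos.2 h1
    unfold orbitCount; omega

lemma cnt_succ (n c : ℕ) : cnt (n + 1) (c + 1) = cnt n c + n * cnt n (c + 1) := by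
  rw [cnt, Finset.univ_perm_fin_succ, Finset.filter_map, Finset.card_map,
    ← Finset.univ_product_univ, Finset.card_filter, Finset.sum_product]
  simp only [Function.comp_apply, Equiv.coe_toEmbedding]
  rw [Fin.sum_univ_succ]
  have h0 : (∑ e : Perm (Fin n),
      if orbitCount (Equiv.Perm.decomposeFin.symm ((0 : Fin (n + 1)), e)) = c + 1
      then 1 else 0) = cnt n c := by
    rw [cnt, Finset.card_filter]
    apply Finset.sum_congr rfl
    intro e _
    rw [orbitCount_decomposeFin]
    simp
  have hs : ∀ q : Fin n, (∑ e : Perm (Fin n),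
      if orbitCount (Equiv.Perm.decomposeFin.symm (Fin.succ q, e)) = c + 1
      then 1 else 0) = cnt n (c + 1) := by
    intro q
    rw [cnt, Finset.card_filter]
    apply Finset.sum_congr rfl
    intro e _
    rw [orbitCount_decomposeFin]
    simp [Fin.succ_ne_zero]
  rw [h0, Finset.sum_congr rfl fun q _ => hs q, Finset.sum_const, Finset.card_univ,
    Fintype.card_fin, smul_eq_mul]

lemma perm_fin_one_eq (σ : Perm (Fin 1)) : σ = 1 := by
  ext i
  have h1 := (σ i).isLt
  have h2 := i.isLt
  omega

lemma cnt_one_one : cnt 1 1 = 1 := by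
  classical
  have : (Finset.univ.filter fun σ : Perm (Fin 1) => orbitCount σ = 1) = Finset.univ := by
    apply Finset.filter_true_of_mem
    intro σ _
    rw [perm_fin_one_eq σ, orbitCount_one]
  rw [cnt, this, Finset.card_univ, Fintype.card_perm, Fintype.card_fin]
  rfl

lemma cnt_one_two : cnt 1 2 = 0 := by
  classical
  rw [cnt, Finset.card_eq_zero, Finset.filter_eq_empty_iff]
  intro σ _
  rw [perm_fin_one_eq σ, orbitCount_one]
  omega

lemma cnt_zero {n : ℕ} (hn : 0 < n) : cnt n 0 = 0 := by
  classical
  rw [cnt, Finset.card_eq_zero, Finset.filter_eq_empty_iff]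
  intro σ _
  have := one_le_orbitCount hn σ
  omega

lemma cnt_one (n : ℕ) (hn : 1 ≤ n) : cnt n 1 = (n - 1).factorial := by
  induction n, hn using Nat.le_induction with
  | base => exact cnt_one_one
  | succ n hn ih =>
    rw [cnt_succ, cnt_zero (by omega), ih]
    simp only [Nat.add_sub_cancel, zero_add]
    rw [← Nat.mul_factorial_pred (by omega : n ≠ 0)]

lemma cnt_two (n : ℕ) (hn : 1 ≤ n) :
    cnt n 2 = ∑ j ∈ Finset.Icc 1 (n - 1), (n - 1).factorial / j := by
  induction n, hn using Nat.le_induction with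
  | base => simp [cnt_one_two]
  | succ n hn ih =>
    rw [cnt_succ, ih, cnt_one n hn]
    simp only [Nat.add_sub_cancel]
    have hins : Finset.Icc 1 n = insert n (Finset.Icc 1 (n - 1)) := by
      ext j
      simp only [Finset.mem_Icc, Finset.mem_insert]
      omega
    rw [hins, Finset.sum_insert (by simp only [Finset.mem_Icc]; omega)]
    have h1 : n.factorial / n = (n - 1).factorial := by
      rw [← Nat.mul_factorial_pred (by omega : n ≠ 0), Nat.mul_div_cancel_left _ (by omega)]
    rw [h1, Finset.mul_sum]
    congr 1
    apply Finset.sum_congr rfl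
    intro j hj
    rw [Finset.mem_Icc] at hj
    have hdvd : j ∣ (n - 1).factorial := Nat.dvd_factorial (by omega) (by omega)
    rw [← Nat.mul_div_assoc n hdvd, Nat.mul_factorial_pred (by omega : n ≠ 0)]

end Counting

section SignDet

variable {k : ℕ}

lemma sign_eq_orbitCount (σ : Perm (Fin k)) :
    (Equiv.Perm.sign σ : ℤ) = (-1) ^ (k - orbitCount σ) := by
  have hs : σ.cycleType.sum ≤ k := by
    rw [Equiv.Perm.sum_cycleType]
    simpa using Finset.card_le_univ σ.support
  have hc : Multiset.card σ.cycleType ≤ σ.cycleType.sum := by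
    have := Multiset.card_nsmul_le_sum (s := σ.cycleType) (a := 1)
      (fun a ha => Nat.one_le_of_lt (Equiv.Perm.one_lt_of_mem_cycleType ha))
    simpa using this
  have hfix : (Finset.univ.filter fun i : Fin k => σ i = i).card = k - σ.cycleType.sum := by
    rw [Equiv.Perm.sum_cycleType]
    have : (Finset.univ.filter fun i : Fin k => σ i = i) = σ.supportᶜ := by
      ext i; simp [Equiv.Perm.mem_support]
    rw [this, Finset.card_compl, Fintype.card_fin]
  have hoc : orbitCount σ = (k - σ.cycleType.sum) + Multiset.card σ.cycleType := by
    rw [orbitCount, hfix]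
  rw [Equiv.Perm.sign_of_cycleType]
  have hexp : k - orbitCount σ = σ.cycleType.sum - Multiset.card σ.cycleType := by omega
  rw [hexp]
  have h2 : σ.cycleType.sum + Multiset.card σ.cycleType =
      (σ.cycleType.sum - Multiset.card σ.cycleType) + 2 * Multiset.card σ.cycleType := by omega
  rw [h2]
  push_cast
  rw [pow_add, pow_mul]
  norm_num

lemma sum_sign_ite_eq_det {X : Type*} [DecidableEq X] (x : Fin k → X) :
    (∑ σ : Perm (Fin k), (Equiv.Perm.sign σ : ℤ) * (if ∀ i, x (σ i) = x i then 1 else 0)) =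
      (Matrix.of fun i j : Fin k => if x i = x j then (1 : ℤ) else 0).det := by
  rw [Matrix.det_apply]
  apply Finset.sum_congr rfl
  intro σ _
  simp only [Matrix.of_apply]
  rw [Fintype.prod_boole]
  simp [Units.smul_def]

lemma det_one_of_injective {X : Type*} [DecidableEq X] {x : Fin k → X}
    (hx : Function.Injective x) :
    (Matrix.of fun i j : Fin k => if x i = x j then (1 : ℤ) else 0).det = 1 := by
  have : (Matrix.of fun i j : Fin k => if x i = x j then (1 : ℤ) else 0) = 1 := by
    ext i j
    rw [Matrix.one_apply]
    simp only [Matrix.of_apply]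
    exact if_congr hx.eq_iff rfl rfl
  rw [this, Matrix.det_one]

lemma det_zero_of_not_injective {X : Type*} [DecidableEq X] {x : Fin k → X}
    (hx : ¬ Function.Injective x) :
    (Matrix.of fun i j : Fin k => if x i = x j then (1 : ℤ) else 0).det = 0 := by
  obtain ⟨a, b, hab, hne⟩ := Function.not_injective_iff.1 hx
  apply Matrix.det_zero_of_row_eq hne
  funext l
  simp only [Matrix.of_apply, hab]

end SignDet

theorem stmt_10 (X : Type*) [DecidableEq X] (k : ℕ) (hk : 3 ≤ k) (x : Fin k → X) :
    (Function.Injective x → Rk x = 1) ∧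
    ((∀ i j, x i = x j) →
      Rk x = (-1) ^ (k - 1) *
        ∑ j ∈ Finset.Icc 2 (k - 1), ((k - 1).factorial / j : ℕ)) ∧
    ((Finset.univ.image x).card = 2 →
      Rk x = (-1) ^ (k - 1) *
        ((Finset.univ.filter (fun σ : Equiv.Perm (Fin k) =>
          orbitCount σ = 2 ∧ ∀ i, x (σ i) = x i)).card : ℤ)) ∧
    (¬Function.Injective x → 3 ≤ (Finset.univ.image x).card → Rk x = 0) := by
  obtain ⟨m, rfl⟩ : ∃ m, k = m + 3 := ⟨k - 3, by omega⟩
  clear hk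
  set f : Perm (Fin (m + 3)) → ℤ :=
    fun σ => (Equiv.Perm.sign σ : ℤ) * (if ∀ i, x (σ i) = x i then 1 else 0) with hf
  have hRk : Rk x = ∑ σ ∈ Finset.univ.filter
      (fun σ : Perm (Fin (m + 3)) => 3 ≤ orbitCount σ), f σ := rfl
  set A1 : ℤ := ∑ σ ∈ Finset.univ.filter
      (fun σ : Perm (Fin (m + 3)) => orbitCount σ = 1), f σ with hA1def
  set A2 : ℤ := ∑ σ ∈ Finset.univ.filter
      (fun σ : Perm (Fin (m + 3)) => orbitCount σ = 2), f σ with hA2def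
  have hm1 : m + 3 - 1 = m + 2 := rfl
  have hsgn1 : ∀ σ : Perm (Fin (m + 3)), orbitCount σ = 1 →
      (Equiv.Perm.sign σ : ℤ) = (-1) ^ (m + 2) := by
    intro σ h
    rw [sign_eq_orbitCount, h, hm1]
  have hsgn2 : ∀ σ : Perm (Fin (m + 3)), orbitCount σ = 2 →
      (Equiv.Perm.sign σ : ℤ) = (-1) ^ (m + 1) := by
    intro σ h
    rw [sign_eq_orbitCount, h, (show m + 3 - 2 = m + 1 from rfl)]
  have hunion : Finset.univ.filter (fun σ : Perm (Fin (m + 3)) => ¬ 3 ≤ orbitCount σ)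
      = Finset.univ.filter (fun σ : Perm (Fin (m + 3)) => orbitCount σ = 1)
        ∪ Finset.univ.filter (fun σ => orbitCount σ = 2) := by
    ext σ
    have h1 := one_le_orbitCount (by omega : 0 < m + 3) σ
    simp only [Finset.mem_filter, Finset.mem_union, Finset.mem_univ, true_and]
    omega
  have hdisj : Disjoint
      (Finset.univ.filter fun σ : Perm (Fin (m + 3)) => orbitCount σ = 1)
      (Finset.univ.filter fun σ : Perm (Fin (m + 3)) => orbitCount σ = 2) := by
    rw [Finset.disjoint_left]
    intro σ h1 h2
    simp only [Finset.mem_filter] at h1 h2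
    omega
  have hsplit : Rk x + (A1 + A2) = ∑ σ : Perm (Fin (m + 3)), f σ := by
    rw [hRk, hA1def, hA2def, ← Finset.sum_union hdisj, ← hunion]
    exact Finset.sum_filter_add_sum_filter_not _ _ f
  have hdetS : (∑ σ : Perm (Fin (m + 3)), f σ)
      = (Matrix.of fun i j : Fin (m + 3) => if x i = x j then (1 : ℤ) else 0).det :=
    sum_sign_ite_eq_det x
  refine ⟨?_, ?_, ?_, ?_⟩
  · -- injective case
    intro hinj
    have hS : (∑ σ : Perm (Fin (m + 3)), f σ) = 1 := by
      rw [hdetS, det_one_of_injective hinj]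
    have hAzero : ∀ c : ℕ, c = 1 ∨ c = 2 → ∀ σ ∈ Finset.univ.filter
        (fun σ : Perm (Fin (m + 3)) => orbitCount σ = c), f σ = 0 := by
      intro c hc σ hσ
      rw [Finset.mem_filter] at hσ
      rw [hf]
      by_cases hind : ∀ i, x (σ i) = x i
      · exfalso
        have hσ1 : σ = 1 := Equiv.ext fun i => hinj (hind i)
        rw [hσ1, orbitCount_one] at hσ
        omega
      · simp [hind]
    have hA1 : A1 = 0 := Finset.sum_eq_zero (hAzero 1 (Or.inl rfl))
    have hA2 : A2 = 0 := Finset.sum_eq_zero (hAzero 2 (Or.inr rfl))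
    rw [hA1, hA2, hS] at hsplit
    linarith
  · -- constant case
    intro hconst
    have hindall : ∀ σ : Perm (Fin (m + 3)), ∀ i, x (σ i) = x i := fun σ i => hconst _ _
    have hninj : ¬ Function.Injective x := by
      intro hinj
      have h01 : (⟨0, by omega⟩ : Fin (m + 3)) = ⟨1, by omega⟩ := hinj (hconst _ _)
      simpa using h01
    have hS : (∑ σ : Perm (Fin (m + 3)), f σ) = 0 := by
      rw [hdetS, det_zero_of_not_injective hninj]
    have hA1 : A1 = ((m + 2).factorial : ℤ) * (-1) ^ (m + 2) := by
      have hterm : ∀ σ ∈ Finset.univ.filter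
          (fun σ : Perm (Fin (m + 3)) => orbitCount σ = 1), f σ = (-1 : ℤ) ^ (m + 2) := by
        intro σ hσ
        rw [Finset.mem_filter] at hσ
        rw [hf]
        simp only
        rw [if_pos (hindall σ), mul_one, hsgn1 σ hσ.2]
      rw [hA1def, Finset.sum_congr rfl hterm, Finset.sum_const, nsmul_eq_mul]
      congr 1
      have := cnt_one (m + 3) (by omega)
      rw [cnt] at this
      rw [this, hm1]
    have hA2 : A2 = ((∑ j ∈ Finset.Icc 1 (m + 2), (m + 2).factorial / j : ℕ) : ℤ)
        * (-1) ^ (m + 1) := by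
      have hterm : ∀ σ ∈ Finset.univ.filter
          (fun σ : Perm (Fin (m + 3)) => orbitCount σ = 2), f σ = (-1 : ℤ) ^ (m + 1) := by
        intro σ hσ
        rw [Finset.mem_filter] at hσ
        rw [hf]
        simp only
        rw [if_pos (hindall σ), mul_one, hsgn2 σ hσ.2]
      rw [hA2def, Finset.sum_congr rfl hterm, Finset.sum_const, nsmul_eq_mul]
      congr 2
      have := cnt_two (m + 3) (by omega)
      rw [cnt] at this
      rw [this, hm1]
    have hIcc : Finset.Icc 1 (m + 2) = insert 1 (Finset.Icc 2 (m + 2)) := by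
      ext j
      simp only [Finset.mem_Icc, Finset.mem_insert]
      omega
    have hN : ((∑ j ∈ Finset.Icc 1 (m + 2), (m + 2).factorial / j : ℕ) : ℤ)
        = ((m + 2).factorial : ℤ)
          + ((∑ j ∈ Finset.Icc 2 (m + 2), (m + 2).factorial / j : ℕ) : ℤ) := by
      rw [hIcc, Finset.sum_insert (by simp)]
      push_cast
      simp
    rw [hS] at hsplit
    rw [hN] at hA2
    rw [hm1]
    have : Rk x = -A1 - A2 := by linarith
    rw [this, hA1, hA2, pow_succ]
    ring
  · -- two values case
    intro himg
    have hninj : ¬ Function.Injective x := by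
      intro hinj
      have := Finset.card_image_of_injective Finset.univ hinj
      rw [himg, Finset.card_univ, Fintype.card_fin] at this
      omega
    have hS : (∑ σ : Perm (Fin (m + 3)), f σ) = 0 := by
      rw [hdetS, det_zero_of_not_injective hninj]
    have hA1 : A1 = 0 := by
      apply Finset.sum_eq_zero
      intro σ hσ
      rw [Finset.mem_filter] at hσ
      rw [hf]
      simp only
      rw [if_neg, mul_zero]
      intro hind
      have := card_image_le_orbitCount x σ hind
      rw [himg, hσ.2] at this
      omega
    have hA2 : A2 = ((Finset.univ.filter (fun σ : Perm (Fin (m + 3)) =>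
        orbitCount σ = 2 ∧ ∀ i, x (σ i) = x i)).card : ℤ) * (-1) ^ (m + 1) := by
      have h1 : A2 = ∑ σ ∈ Finset.univ.filter
          (fun σ : Perm (Fin (m + 3)) => orbitCount σ = 2),
          (if ∀ i, x (σ i) = x i then (Equiv.Perm.sign σ : ℤ) else 0) := by
        rw [hA2def]
        apply Finset.sum_congr rfl
        intro σ _
        rw [hf]
        simp only
        split_ifs <;> ring
      rw [h1, ← Finset.sum_filter, Finset.filter_filter]
      have hterm : ∀ σ ∈ Finset.univ.filter
          (fun σ : Perm (Fin (m + 3)) => orbitCount σ = 2 ∧ ∀ i, x (σ i) = x i),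
          (Equiv.Perm.sign σ : ℤ) = (-1 : ℤ) ^ (m + 1) := by
        intro σ hσ
        rw [Finset.mem_filter] at hσ
        exact hsgn2 σ hσ.2.1
      rw [Finset.sum_congr rfl hterm, Finset.sum_const, nsmul_eq_mul]
    rw [hS, hA1] at hsplit
    rw [hm1]
    have : Rk x = -A2 := by linarith
    rw [this, hA2, pow_succ]
    ring
  · -- at least three values case
    intro hninj hge3
    have hS : (∑ σ : Perm (Fin (m + 3)), f σ) = 0 := by
      rw [hdetS, det_zero_of_not_injective hninj]
    have hAzero : ∀ c : ℕ, c < 3 → ∀ σ ∈ Finset.univ.filter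
        (fun σ : Perm (Fin (m + 3)) => orbitCount σ = c), f σ = 0 := by
      intro c hc σ hσ
      rw [Finset.mem_filter] at hσ
      rw [hf]
      simp only
      rw [if_neg, mul_zero]
      intro hind
      have := card_image_le_orbitCount x σ hind
      rw [hσ.2] at this
      omega
    have hA1 : A1 = 0 := Finset.sum_eq_zero (hAzero 1 (by omega))
    have hA2 : A2 = 0 := Finset.sum_eq_zero (hAzero 2 (by omega))
    rw [hS, hA1, hA2] at hsplit
    linarith
end
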